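/- arXiv:1206.2102 — 7 statements merged into one kernel-verified Lean document; each statement's English description precedes it below -/
import Mathlib

section
/- Let K be an algebraically closed field containing F, complete with respect to a valuation v extending v_p. (i) If z ∈ K satisfies 0 < v(z) < 1/((q−1)·e), then v(z^q + π·z) = q·v(z). (ii) If w ∈ K satisfies 0 < v(w) < q/((q−1)·e), then every root z ∈ K of the polynomial X^q + π·X − w satisfies v(z) = v(w)/q. Consequently, for all real numbers 0 < s ≤ r < 1/((q−1)·e), the image of the annulus {z ∈ K : s ≤ v(z) ≤ r} under the map z ↦ z^q + π·z is exactly the annulus {w ∈ K : q·s ≤ v(w) ≤ q·r}. -/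
private lemma ereal_nsmul_coe (n : ℕ) (a : ℝ) :
    n • ((a : ℝ) : EReal) = (((n : ℝ) * a : ℝ) : EReal) := by
  induction n with
  | zero => simp
  | succ k ih => rw [succ_nsmul, ih, ← EReal.coe_add]; exact congrArg _ (by push_cast; ring)

private lemma ereal_add_eq_zero_finite {x y : EReal} (h : x + y = 0) : x ≠ ⊤ ∧ x ≠ ⊥ := by
  constructor
  · intro ht
    subst ht
    by_cases hy : y = ⊥
    · rw [hy, EReal.add_bot] at h; exact absurd h (by simp)
    · rw [EReal.top_add_of_ne_bot hy] at h; exact absurd h (by simp)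
  · intro hb
    rw [hb, EReal.bot_add] at h; exact absurd h (by simp)

/-- Let `K` be an algebraically closed field (containing `F`), equipped with an
(additive, `EReal`-valued) valuation `v` extending `v_p` (so that `v π = 1/e`, where `e` is the
absolute ramification index and `q ≥ 2` is the residue cardinality).
(i) If `0 < v z < 1/((q-1)e)` then `v (z^q + π z) = q • v z`.
(ii) If `0 < v w < q/((q-1)e)` then every root `z` of `X^q + π X - w` satisfies `q • v z = v w`.
(iii) Consequently, for `0 < s ≤ r < 1/((q-1)e)`, the image of the annulus
`{z | s ≤ v z ≤ r}` under `z ↦ z^q + π z` is exactly the annulus `{w | q s ≤ v w ≤ q r}`. -/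
theorem stmt_0
    (K : Type*) [Field K] [IsAlgClosed K]
    (v : K → EReal)
    (hv0 : v 0 = ⊤) (hv1 : v 1 = 0)
    (hvmul : ∀ x y : K, v (x * y) = v x + v y)
    (hvadd : ∀ x y : K, min (v x) (v y) ≤ v (x + y))
    (π : K) (q e : ℕ) (hq : 2 ≤ q) (he : 0 < e)
    (hπ : v π = ((1 / (e : ℝ) : ℝ) : EReal)) :
    (∀ z : K, 0 < v z → v z < ((1 / (((q : ℝ) - 1) * (e : ℝ)) : ℝ) : EReal) →
        v (z ^ q + π * z) = q • v z) ∧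
    (∀ w : K, 0 < v w → v w < (((q : ℝ) / (((q : ℝ) - 1) * (e : ℝ)) : ℝ) : EReal) →
        ∀ z : K, z ^ q + π * z = w → q • v z = v w) ∧
    (∀ s r : ℝ, 0 < s → s ≤ r → r < 1 / (((q : ℝ) - 1) * (e : ℝ)) →
        (fun z : K => z ^ q + π * z) '' {z : K | (s : EReal) ≤ v z ∧ v z ≤ (r : EReal)} =
          {w : K | (((q : ℝ) * s : ℝ) : EReal) ≤ v w ∧ v w ≤ (((q : ℝ) * r : ℝ) : EReal)}) := by
  have hE : (0:ℝ) < (e:ℝ) := by exact_mod_cast he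
  have hQ : (2:ℝ) ≤ (q:ℝ) := by exact_mod_cast hq
  have hQE : (0:ℝ) < ((q:ℝ) - 1) * (e:ℝ) := by nlinarith
  -- finiteness of v on nonzero elements
  have hfin : ∀ z : K, z ≠ 0 → ∃ a : ℝ, v z = (a : EReal) := by
    intro z hz
    have h := hvmul z z⁻¹
    rw [mul_inv_cancel₀ hz, hv1] at h
    obtain ⟨ht, hb⟩ := ereal_add_eq_zero_finite h.symm
    lift v z to ℝ using ⟨ht, hb⟩ with a
    exact ⟨a, rfl⟩
  -- v(-x) = v x
  have hneg : ∀ x : K, v (-x) = v x := by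
    have hm1 : v (-1 : K) = 0 := by
      have h := hvmul (-1 : K) (-1)
      rw [neg_mul_neg, one_mul, hv1] at h
      obtain ⟨ht, hb⟩ := ereal_add_eq_zero_finite h.symm
      lift v (-1 : K) to ℝ using ⟨ht, hb⟩ with a ha
      have h2 : a + a = 0 := by exact_mod_cast h.symm
      have h3 : a = 0 := by linarith
      rw [h3]; rfl
    intro x
    have h := hvmul (-1 : K) x
    rw [hm1, zero_add, neg_one_mul] at h
    exact h
  -- ultrametric equality
  have hlt : ∀ x y : K, v x < v y → v (x + y) = v x := by
    intro x y hxy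
    refine le_antisymm ?_ (le_trans (le_min le_rfl hxy.le) (hvadd x y))
    have h2 : min (v (x + y)) (v y) ≤ v x := by
      have h3 := hvadd (x + y) (-y)
      rwa [add_neg_cancel_right, hneg] at h3
    by_contra hcon
    push_neg at hcon
    exact absurd h2 (not_le.mpr (lt_min hcon hxy))
  -- v of powers
  have hpow : ∀ (z : K) (a : ℝ), v z = (a : EReal) → ∀ n : ℕ,
      v (z ^ n) = (((n : ℝ) * a : ℝ) : EReal) := by
    intro z a ha n
    induction n with
    | zero => simp [hv1]
    | succ k ih =>
      rw [pow_succ, hvmul, ih, ha, ← EReal.coe_add]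
      exact congrArg _ (by push_cast; ring)
  -- part (i)
  have part1 : ∀ z : K, 0 < v z → v z < ((1 / (((q : ℝ) - 1) * (e : ℝ)) : ℝ) : EReal) →
      v (z ^ q + π * z) = q • v z := by
    intro z h0 h1
    have hz : z ≠ 0 := by
      rintro rfl
      rw [hv0] at h1
      exact absurd h1 (by simp)
    obtain ⟨a, ha⟩ := hfin z hz
    rw [ha] at h0 h1
    have ha0 : 0 < a := by exact_mod_cast h0
    have ha1 : a < 1 / (((q:ℝ) - 1) * (e:ℝ)) := by exact_mod_cast h1
    have hineq : (q:ℝ) * a < 1 / (e:ℝ) + a := by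
      have h5 := (lt_div_iff₀ hQE).mp ha1
      have h1e : ((q:ℝ) - 1) * a < 1 / (e:ℝ) := by
        rw [lt_div_iff₀ hE]; nlinarith
      nlinarith
    have hvzq : v (z ^ q) = (((q:ℝ) * a : ℝ) : EReal) := hpow z a ha q
    have hvpz : v (π * z) = ((1 / (e:ℝ) + a : ℝ) : EReal) := by
      rw [hvmul, hπ, ha, ← EReal.coe_add]
    rw [hlt (z ^ q) (π * z) (by rw [hvzq, hvpz]; exact_mod_cast hineq), hvzq, ha,
      ereal_nsmul_coe]
  -- part (ii)
  have part2 : ∀ w : K, 0 < v w →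
      v w < (((q : ℝ) / (((q : ℝ) - 1) * (e : ℝ)) : ℝ) : EReal) →
      ∀ z : K, z ^ q + π * z = w → q • v z = v w := by
    intro w h0 h1 z hzw
    have hw : w ≠ 0 := by
      rintro rfl
      rw [hv0] at h1
      exact absurd h1 (by simp)
    have hz : z ≠ 0 := by
      rintro rfl
      rw [zero_pow (by omega : q ≠ 0), mul_zero, add_zero] at hzw
      exact hw hzw.symm
    obtain ⟨a, ha⟩ := hfin z hz
    obtain ⟨b, hb⟩ := hfin w hw
    rw [hb] at h0 h1
    have hb0 : 0 < b := by exact_mod_cast h0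
    have hb1 : b < (q:ℝ) / (((q:ℝ) - 1) * (e:ℝ)) := by exact_mod_cast h1
    have hb1' : b * (((q:ℝ) - 1) * (e:ℝ)) < (q:ℝ) := (lt_div_iff₀ hQE).mp hb1
    have hvzq : v (z ^ q) = (((q:ℝ) * a : ℝ) : EReal) := hpow z a ha q
    have hvpz : v (π * z) = ((1 / (e:ℝ) + a : ℝ) : EReal) := by
      rw [hvmul, hπ, ha, ← EReal.coe_add]
    rw [ha, ereal_nsmul_coe, hb]
    rcases lt_trichotomy ((q:ℝ) * a) (1 / (e:ℝ) + a) with hc | hc | hc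
    · -- dominant term z^q
      have h4 : v (z ^ q + π * z) = (((q:ℝ) * a : ℝ) : EReal) := by
        rw [hlt (z ^ q) (π * z) (by rw [hvzq, hvpz]; exact_mod_cast hc), hvzq]
      rw [hzw, hb] at h4
      exact h4.symm
    · -- equality case: contradiction
      exfalso
      have hmin : ((((q:ℝ) * a : ℝ)) : EReal) ≤ v w := by
        rw [← hzw]
        refine le_trans ?_ (hvadd (z ^ q) (π * z))
        rw [hvzq, hvpz, hc]; simp
      rw [hb] at hmin
      have hqa : (q:ℝ) * a ≤ b := by exact_mod_cast hmin
      have he1 : ((q:ℝ) - 1) * a * (e:ℝ) = 1 := by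
        field_simp at hc; nlinarith
      nlinarith
    · -- dominant term π z : contradiction
      exfalso
      have h4 : v (z ^ q + π * z) = ((1 / (e:ℝ) + a : ℝ) : EReal) := by
        rw [add_comm (z ^ q) (π * z),
          hlt (π * z) (z ^ q) (by rw [hvzq, hvpz]; exact_mod_cast hc), hvpz]
      rw [hzw, hb] at h4
      have hbe : b = 1 / (e:ℝ) + a := by exact_mod_cast h4
      have he1 : 1 < ((q:ℝ) - 1) * a * (e:ℝ) := by
        have h5 : 1 / (e:ℝ) < ((q:ℝ) - 1) * a := by nlinarith
        rw [div_lt_iff₀ hE] at h5; nlinarith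
      have hbe' : b * (e:ℝ) = 1 + a * (e:ℝ) := by
        rw [hbe]; field_simp
      nlinarith
  refine ⟨part1, part2, ?_⟩
  -- part (iii)
  intro s r hs hsr hr
  ext w
  constructor
  · rintro ⟨z, ⟨hzs, hzr⟩, rfl⟩
    have hz : z ≠ 0 := by
      rintro rfl
      rw [hv0] at hzr
      exact absurd hzr (by simp)
    obtain ⟨a, ha⟩ := hfin z hz
    rw [ha] at hzs hzr
    have has : s ≤ a := by exact_mod_cast hzs
    have har : a ≤ r := by exact_mod_cast hzr
    have h0 : (0 : EReal) < v z := by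
      rw [ha]; exact_mod_cast lt_of_lt_of_le hs has
    have h1 : v z < ((1 / (((q : ℝ) - 1) * (e : ℝ)) : ℝ) : EReal) := by
      rw [ha]; exact_mod_cast lt_of_le_of_lt har hr
    have hp := part1 z h0 h1
    rw [ha, ereal_nsmul_coe] at hp
    constructor
    · rw [hp]; exact_mod_cast (by nlinarith : (q:ℝ) * s ≤ (q:ℝ) * a)
    · rw [hp]; exact_mod_cast (by nlinarith : (q:ℝ) * a ≤ (q:ℝ) * r)
  · rintro ⟨hws, hwr⟩
    have hw : w ≠ 0 := by
      rintro rfl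
      rw [hv0] at hwr
      exact EReal.coe_ne_top _ (top_le_iff.mp hwr)
    obtain ⟨b, hb⟩ := hfin w hw
    rw [hb] at hws hwr
    have hbs : (q:ℝ) * s ≤ b := by exact_mod_cast hws
    have hbr : b ≤ (q:ℝ) * r := by exact_mod_cast hwr
    -- find a root of X^q + π X - w
    obtain ⟨z, hz⟩ : ∃ z : K, z ^ q + π * z = w := by
      obtain ⟨z, hz⟩ := IsAlgClosed.exists_root
        (Polynomial.X ^ q + (Polynomial.C π * Polynomial.X - Polynomial.C w)) (by
          have hdeg : (Polynomial.C π * Polynomial.X - Polynomial.C w :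
              Polynomial K).degree < (q : ℕ) := by
            refine lt_of_le_of_lt (Polynomial.degree_sub_le _ _) ?_
            rw [max_lt_iff]
            constructor
            · refine lt_of_le_of_lt (Polynomial.degree_mul_le _ _) ?_
              rw [Polynomial.degree_X]
              refine lt_of_le_of_lt (add_le_add_left Polynomial.degree_C_le 1) ?_
              rw [zero_add]
              exact_mod_cast (by omega : (1:ℕ) < q)
            · refine lt_of_le_of_lt Polynomial.degree_C_le ?_
              exact_mod_cast (by omega : (0:ℕ) < q)
          rw [Polynomial.degree_add_eq_left_of_degree_lt (by
            rwa [Polynomial.degree_X_pow]), Polynomial.degree_X_pow]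
          exact_mod_cast (by omega : q ≠ 0))
      refine ⟨z, ?_⟩
      simp only [Polynomial.IsRoot, Polynomial.eval_add, Polynomial.eval_sub,
        Polynomial.eval_pow, Polynomial.eval_mul, Polynomial.eval_C, Polynomial.eval_X] at hz
      linear_combination hz
    have hz0 : z ≠ 0 := by
      rintro rfl
      rw [zero_pow (by omega : q ≠ 0), mul_zero, add_zero] at hz
      exact hw hz.symm
    obtain ⟨a, ha⟩ := hfin z hz0
    have hvw0 : (0 : EReal) < v w := by
      rw [hb]; exact_mod_cast lt_of_lt_of_le (by nlinarith) hbs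
    have hvw1 : v w < (((q : ℝ) / (((q : ℝ) - 1) * (e : ℝ)) : ℝ) : EReal) := by
      rw [hb]
      have h5 : b < (q:ℝ) / (((q:ℝ) - 1) * (e:ℝ)) := by
        refine lt_of_le_of_lt hbr ?_
        rw [lt_div_iff₀ hQE]
        have h6 : r * (((q:ℝ) - 1) * (e:ℝ)) < 1 := (lt_div_iff₀ hQE).mp hr
        nlinarith
      exact_mod_cast h5
    have hp := part2 w hvw0 hvw1 z hz
    rw [ha, ereal_nsmul_coe, hb] at hp
    have hqa : (q:ℝ) * a = b := by exact_mod_cast hp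
    have has : s ≤ a := by nlinarith
    have har : a ≤ r := by nlinarith
    exact ⟨z, ⟨by rw [ha]; exact_mod_cast has, by rw [ha]; exact_mod_cast har⟩, hz⟩
end

section
/- Let E be a field, let q ≥ 2 be an integer, let π, c ∈ E, and let A := E[X]/(X^q + π·X − c), a free E-algebra of rank q, with u the image of X. Then the E-algebra trace Tr_{A/E} satisfies: Tr_{A/E}(1) = q·1, Tr_{A/E}(u^i) = 0 for every i with 1 ≤ i ≤ q−2, and Tr_{A/E}(u^{q−1}) = (1−q)·π. If moreover c ≠ 0, then u is invertible in A and Tr_{A/E}(u^{−1}) = π/c. -/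
open Polynomial

theorem stmt2_deg {E : Type*} [Field E] {q : ℕ} (hq : 2 ≤ q) {π c : E} {f : Polynomial E}
    (hf : f = Polynomial.X ^ q + Polynomial.C π * Polynomial.X - Polynomial.C c) :
    f.Monic ∧ f.natDegree = q := by
  have h1 : ((C π * X - C c : E[X])).degree < (X ^ q : E[X]).degree := by
    rw [degree_X_pow]
    refine lt_of_le_of_lt (degree_sub_le _ _) ?_
    rw [max_lt_iff]
    refine ⟨lt_of_le_of_lt (degree_C_mul_X_le _) ?_, lt_of_le_of_lt degree_C_le ?_⟩
    · exact_mod_cast lt_of_lt_of_le one_lt_two hq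
    · exact_mod_cast lt_of_lt_of_le zero_lt_two hq
  have hf2 : f = X ^ q + (C π * X - C c) := by rw [hf]; ring
  constructor
  · rw [hf2]; exact (monic_X_pow q).add_of_left h1
  · have : f.degree = q := by
      rw [hf2, degree_add_eq_left_of_degree_lt h1, degree_X_pow]
    exact natDegree_eq_of_degree_eq_some this

theorem stmt2_mod_lt {E : Type*} [Field E] {q : ℕ} (hq : 2 ≤ q) {π c : E} {f : Polynomial E}
    (hf : f = Polynomial.X ^ q + Polynomial.C π * Polynomial.X - Polynomial.C c)
    {m : ℕ} (hm : m < q) : (X ^ m : E[X]) %ₘ f = X ^ m := by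
  obtain ⟨hmon, hdeg⟩ := stmt2_deg hq hf
  rw [modByMonic_eq_self_iff hmon, degree_X_pow, degree_eq_natDegree hmon.ne_zero, hdeg]
  exact_mod_cast hm

theorem stmt2_mod_ge {E : Type*} [Field E] {q : ℕ} (hq : 2 ≤ q) {π c : E} {f : Polynomial E}
    (hf : f = Polynomial.X ^ q + Polynomial.C π * Polynomial.X - Polynomial.C c)
    {m : ℕ} (hm1 : q ≤ m) (hm2 : m ≤ 2 * q - 2) :
    (X ^ m : E[X]) %ₘ f = C c * X ^ (m - q) - C π * X ^ (m - q + 1) := by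
  obtain ⟨hmon, hdeg⟩ := stmt2_deg hq hf
  have hsplit : (X ^ m : E[X]) = (C c * X ^ (m - q) - C π * X ^ (m - q + 1)) + f * X ^ (m - q) := by
    rw [hf]
    have : X ^ q * X ^ (m - q) = (X ^ m : E[X]) := by
      rw [← pow_add, Nat.add_sub_cancel' hm1]
    ring_nf
    rw [← this]
    ring
  rw [hsplit, add_modByMonic, self_mul_modByMonic hmon, add_zero, modByMonic_eq_self_iff hmon]
  have hlt : (m - q + 1 : ℕ) < q := by omega
  refine lt_of_le_of_lt (degree_sub_le _ _) ?_
  rw [max_lt_iff, degree_eq_natDegree hmon.ne_zero, hdeg]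
  constructor
  · refine lt_of_le_of_lt (degree_C_mul_X_pow_le _ _) ?_
    exact_mod_cast by omega
  · refine lt_of_le_of_lt (degree_C_mul_X_pow_le _ _) ?_
    exact_mod_cast hlt

theorem stmt2_trace_pow {E : Type*} [Field E] {q : ℕ} (hq : 2 ≤ q) {π c : E} {f : Polynomial E}
    (hf : f = Polynomial.X ^ q + Polynomial.C π * Polynomial.X - Polynomial.C c) (k : ℕ) :
    Algebra.trace E (AdjoinRoot f) (AdjoinRoot.root f ^ k)
      = ∑ j : Fin f.natDegree, ((X ^ (k + (j : ℕ)) : E[X]) %ₘ f).coeff (j : ℕ) := by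
  obtain ⟨hmon, hdeg⟩ := stmt2_deg hq hf
  rw [Algebra.trace_eq_matrix_trace (AdjoinRoot.powerBasis' hmon).basis, Matrix.trace]
  refine Finset.sum_congr rfl fun j _ => ?_
  rw [Matrix.diag_apply, Algebra.leftMulMatrix_eq_repr_mul]
  have hbj : (AdjoinRoot.powerBasis' hmon).basis j = AdjoinRoot.root f ^ (j : ℕ) :=
    (AdjoinRoot.powerBasis' hmon).basis_eq_pow j
  rw [hbj, ← pow_add, ← AdjoinRoot.mk_X, ← map_pow]
  have := AdjoinRoot.powerBasisAux'_repr_apply_to_fun hmon (AdjoinRoot.mk f (X ^ (k + (j : ℕ)))) j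
  rw [AdjoinRoot.modByMonicHom_mk] at this
  exact this

/-- Let `E` be a field, `q ≥ 2`, `π c ∈ E`, and `A := E[X]/(X^q + π X - c)`
(a free `E`-algebra of rank `q`), with `u` the image of `X`.  Then `Tr_{A/E}(1) = q`,
`Tr_{A/E}(u^i) = 0` for `1 ≤ i ≤ q-2`, and `Tr_{A/E}(u^{q-1}) = (1-q)π`.  If moreover
`c ≠ 0`, then `u` is invertible in `A` and `Tr_{A/E}(u⁻¹) = π/c`. -/
theorem stmt_2
    (E : Type*) [Field E] (q : ℕ) (hq : 2 ≤ q) (π c : E)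
    (f : Polynomial E)
    (hf : f = Polynomial.X ^ q + Polynomial.C π * Polynomial.X - Polynomial.C c) :
    Algebra.trace E (AdjoinRoot f) 1 = (q : E) ∧
    (∀ i : ℕ, 1 ≤ i → i ≤ q - 2 →
      Algebra.trace E (AdjoinRoot f) (AdjoinRoot.root f ^ i) = 0) ∧
    Algebra.trace E (AdjoinRoot f) (AdjoinRoot.root f ^ (q - 1)) = (1 - (q : E)) * π ∧
    (c ≠ 0 → IsUnit (AdjoinRoot.root f) ∧
      Algebra.trace E (AdjoinRoot f) (Ring.inverse (AdjoinRoot.root f)) = π / c) := by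
  obtain ⟨hmon, hdeg⟩ := stmt2_deg hq hf
  haveI : NeZero f.natDegree := ⟨by omega⟩
  have htr1 : Algebra.trace E (AdjoinRoot f) 1 = (q : E) := by
    have := Algebra.trace_algebraMap_of_basis (AdjoinRoot.powerBasis' hmon).basis (1 : E)
    rw [map_one] at this
    rw [this]
    simp only [Fintype.card_fin, AdjoinRoot.powerBasis', hdeg, nsmul_eq_mul, mul_one]
  have htrmid : ∀ i : ℕ, 1 ≤ i → i ≤ q - 2 →
      Algebra.trace E (AdjoinRoot f) (AdjoinRoot.root f ^ i) = 0 := by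
    intro i hi1 hi2
    rw [stmt2_trace_pow hq hf]
    refine Finset.sum_eq_zero fun j _ => ?_
    have hj : (j : ℕ) < q := hdeg ▸ j.2
    rcases lt_or_ge (i + (j : ℕ)) q with h | h
    · rw [stmt2_mod_lt hq hf h, coeff_X_pow, if_neg (by omega)]
    · rw [stmt2_mod_ge hq hf h (by omega)]
      simp only [coeff_sub, coeff_C_mul, coeff_X_pow]
      rw [if_neg (by omega), if_neg (by omega)]
      ring
  have htrtop : Algebra.trace E (AdjoinRoot f) (AdjoinRoot.root f ^ (q - 1))
      = (1 - (q : E)) * π := by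
    rw [stmt2_trace_pow hq hf]
    rw [← Finset.add_sum_erase _ _ (Finset.mem_univ (0 : Fin f.natDegree))]
    have h0 : ((X ^ (q - 1 + ((0 : Fin f.natDegree) : ℕ)) : E[X]) %ₘ f).coeff
        ((0 : Fin f.natDegree) : ℕ) = 0 := by
      rw [Fin.val_zero, Nat.add_zero, stmt2_mod_lt hq hf (by omega), coeff_X_pow,
        if_neg (by omega)]
    rw [h0, zero_add]
    have hconst : ∀ j ∈ (Finset.univ.erase (0 : Fin f.natDegree)),
        ((X ^ (q - 1 + (j : ℕ)) : E[X]) %ₘ f).coeff (j : ℕ) = -π := by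
      intro j hj
      have hj0 : (j : ℕ) ≠ 0 := fun h => (Finset.mem_erase.mp hj).1 (Fin.ext h)
      have hjlt : (j : ℕ) < q := hdeg ▸ j.2
      rw [stmt2_mod_ge hq hf (by omega) (by omega)]
      simp only [coeff_sub, coeff_C_mul, coeff_X_pow]
      rw [if_neg (by omega), if_pos (by omega)]
      ring
    rw [Finset.sum_congr rfl hconst, Finset.sum_const, Finset.card_erase_of_mem
      (Finset.mem_univ _), Finset.card_univ, Fintype.card_fin, hdeg, nsmul_eq_mul]
    rw [Nat.cast_sub (by omega)]
    push_cast
    ring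
  refine ⟨htr1, htrmid, htrtop, fun hc => ?_⟩
  have hroot : AdjoinRoot.root f ^ q
      = AdjoinRoot.of f c - AdjoinRoot.of f π * AdjoinRoot.root f := by
    have h0 : AdjoinRoot.mk f (X ^ q + C π * X - C c) = 0 := by
      rw [← hf]; exact AdjoinRoot.mk_self
    simp only [map_sub, map_add, map_mul, map_pow, AdjoinRoot.mk_X, AdjoinRoot.mk_C] at h0
    linear_combination h0
  set u := AdjoinRoot.root f with hu
  set v := AdjoinRoot.of f c⁻¹ * (u ^ (q - 1) + AdjoinRoot.of f π) with hv
  have huv : u * v = 1 := by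
    rw [hv, mul_comm u, mul_assoc, add_mul, ← pow_succ, Nat.sub_add_cancel (by omega), hroot]
    have hsimp : AdjoinRoot.of f c - AdjoinRoot.of f π * u + AdjoinRoot.of f π * u
        = AdjoinRoot.of f c := by ring
    rw [hsimp, ← map_mul, inv_mul_cancel₀ hc, map_one]
  have hunit : IsUnit u := IsUnit.of_mul_eq_one _ huv
  refine ⟨hunit, ?_⟩
  have hinv : Ring.inverse u = v := by
    obtain ⟨w, hw⟩ := hunit
    rw [← hw, Ring.inverse_unit]
    have : (w : AdjoinRoot f) * v = 1 := by rw [hw]; exact huv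
    exact Units.inv_eq_of_mul_eq_one_right this ▸ rfl
  have hsmul : ∀ x : AdjoinRoot f, AdjoinRoot.of f c⁻¹ * x = c⁻¹ • x := fun x => by
    rw [← AdjoinRoot.algebraMap_eq, ← Algebra.smul_def]
  have htrpi : Algebra.trace E (AdjoinRoot f) (AdjoinRoot.of f π) = (q : E) * π := by
    rw [← AdjoinRoot.algebraMap_eq,
      Algebra.trace_algebraMap_of_basis (AdjoinRoot.powerBasis' hmon).basis]
    simp only [Fintype.card_fin, AdjoinRoot.powerBasis', hdeg, nsmul_eq_mul]
  rw [hinv, hv, hsmul, map_smul, map_add, htrtop, htrpi, smul_eq_mul]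
  field_simp
  ring
end

section
/- For every integer ℓ ≥ 0, the element q^{−1}·Tr(u^ℓ) is a polynomial in w of degree at most ⌊ℓ/q⌋; that is, q^{−1}·Tr(u^ℓ) = ∑_{i=0}^{⌊ℓ/q⌋} a_{ℓ,i}·w^i with a_{ℓ,i} ∈ L, and moreover v_π(a_{ℓ,i}) ≥ ⌊ℓ/q⌋ + 1 − i − v_π(q) for every i. (Equivalently: for the special Lubin–Tate group, the operator ψ = q^{−1}·φ_q^{−1}∘Tr satisfies ψ(u^ℓ) = ∑_{i=0}^{⌊ℓ/q⌋} a_{ℓ,i}·u^i with these bounds.) -/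
open Polynomial

set_option maxHeartbeats 1600000
set_option synthInstance.maxHeartbeats 400000

namespace Stmt4Aux

variable {L : Type*} [Field L]

lemma w0_deg_lt (π : L) {q : ℕ} (hq : 2 ≤ q) :
    (C π * X).degree < ((X : L[X]) ^ q).degree := by
  rw [degree_X_pow]
  calc (C π * X).degree ≤ 0 + 1 := (degree_mul_le _ _).trans (add_le_add degree_C_le degree_X.le)
  _ < (q : WithBot ℕ) := by
        rw [zero_add]
        exact_mod_cast (by omega : (1 : ℕ) < q)

lemma w0_degree (π : L) {q : ℕ} (hq : 2 ≤ q) :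
    ((X : L[X]) ^ q + C π * X).degree = (q : WithBot ℕ) := by
  rw [degree_add_eq_left_of_degree_lt (w0_deg_lt π hq), degree_X_pow]

lemma w0_natDegree (π : L) {q : ℕ} (hq : 2 ≤ q) :
    ((X : L[X]) ^ q + C π * X).natDegree = q :=
  natDegree_eq_of_degree_eq_some (w0_degree π hq)

lemma w0_monic (π : L) {q : ℕ} (hq : 2 ≤ q) : ((X : L[X]) ^ q + C π * X).Monic := by
  apply monic_X_pow_add
  have := w0_deg_lt π hq
  rwa [degree_X_pow] at this

lemma comp_w0_natDegree (π : L) {q : ℕ} (hq : 2 ≤ q) (p : L[X]) :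
    (p.comp ((X : L[X]) ^ q + C π * X)).natDegree = q * p.natDegree := by
  rw [natDegree_comp, w0_natDegree π hq, mul_comm]

lemma comp_w0_ne_zero (π : L) {q : ℕ} (hq : 2 ≤ q) {p : L[X]} (hp : p ≠ 0) :
    p.comp ((X : L[X]) ^ q + C π * X) ≠ 0 := by
  intro h
  have h2 := leadingCoeff_comp (p := p) (q := (X : L[X]) ^ q + C π * X)
    (by rw [w0_natDegree π hq]; omega)
  rw [h, leadingCoeff_zero, (w0_monic π hq).leadingCoeff, one_pow, mul_one] at h2
  exact hp (leadingCoeff_eq_zero.mp h2.symm)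

lemma mod_inj {q a b i j : ℕ} (hi : i < q) (hj : j < q) (h : q * a + i = q * b + j) : i = j := by
  have h2 : (q * a + i) % q = (q * b + j) % q := by rw [h]
  rwa [Nat.mul_add_mod, Nat.mul_add_mod, Nat.mod_eq_of_lt hi, Nat.mod_eq_of_lt hj] at h2

lemma core (π : L) {q : ℕ} (hq : 2 ≤ q) (N : Fin q → L[X])
    (h : ∑ i : Fin q, (N i).comp ((X : L[X]) ^ q + C π * X) * X ^ (i : ℕ) = 0)
    (i : Fin q) : N i = 0 := by
  classical
  by_contra hN
  set s := Finset.univ.filter (fun j : Fin q => N j ≠ 0) with hs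
  have hsn : s.Nonempty := ⟨i, by simp [hs, hN]⟩
  obtain ⟨i₀, hi₀s, hmax⟩ :=
    Finset.exists_max_image s (fun j => q * (N j).natDegree + (j : ℕ)) hsn
  have hi₀ : N i₀ ≠ 0 := by simpa [hs] using hi₀s
  set D := q * (N i₀).natDegree + (i₀ : ℕ) with hD
  have hdeg : ∀ j : Fin q, N j ≠ 0 →
      ((N j).comp ((X : L[X]) ^ q + C π * X) * X ^ (j : ℕ)).natDegree
        = q * (N j).natDegree + (j : ℕ) := by
    intro j hj
    rw [natDegree_mul (comp_w0_ne_zero π hq hj) (pow_ne_zero _ X_ne_zero),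
      comp_w0_natDegree π hq, natDegree_pow, natDegree_X, mul_one]
  have h0 : ∑ j : Fin q, ((N j).comp ((X : L[X]) ^ q + C π * X) * X ^ (j : ℕ)).coeff D = 0 := by
    rw [← finset_sum_coeff, h, coeff_zero]
  have hsingle : ∀ j : Fin q, j ≠ i₀ →
      ((N j).comp ((X : L[X]) ^ q + C π * X) * X ^ (j : ℕ)).coeff D = 0 := by
    intro j hj
    by_cases hNj : N j = 0
    · simp [hNj]
    · apply coeff_eq_zero_of_natDegree_lt
      rw [hdeg j hNj]
      have hle := hmax j (by simp [hs, hNj])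
      have hne : q * (N j).natDegree + (j : ℕ) ≠ D := by
        intro hEq
        exact hj (Fin.ext (mod_inj j.isLt i₀.isLt hEq))
      omega
  rw [Finset.sum_eq_single i₀ (fun j _ hji => hsingle j hji) (by simp)] at h0
  rw [hD, ← hdeg i₀ hi₀, coeff_natDegree, leadingCoeff_mul] at h0
  rcases mul_eq_zero.mp h0 with h1 | h1
  · exact comp_w0_ne_zero π hq hi₀ (leadingCoeff_eq_zero.mp h1)
  · exact pow_ne_zero _ (X_ne_zero (R := L)) (leadingCoeff_eq_zero.mp h1)


lemma mem_adjoin_X (f : RatFunc L) : f ∈ IntermediateField.adjoin L {RatFunc.X} := by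
  have halg : ∀ p : L[X], algebraMap L[X] (RatFunc L) p ∈ IntermediateField.adjoin L {RatFunc.X} := by
    intro p
    have h1 : algebraMap L[X] (RatFunc L) p = Polynomial.aeval (RatFunc.X : RatFunc L) p := by
      have h0 : (Polynomial.aeval (RatFunc.X : RatFunc L) : L[X] →ₐ[L] RatFunc L)
          = (IsScalarTower.toAlgHom L L[X] (RatFunc L)) := by
        apply Polynomial.algHom_ext
        simp [RatFunc.algebraMap_X]
      rw [h0]
      rfl
    rw [h1]
    apply IntermediateField.algebra_adjoin_le_adjoin
    exact Polynomial.aeval_mem_adjoin_singleton _ _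
  induction f using RatFunc.induction_on with
  | f p q hq => exact div_mem (halg p) (halg q)

lemma exists_basis {q : ℕ} (hq : 2 ≤ q) (π : L) (w : RatFunc L)
    (hw : w = RatFunc.X ^ q + RatFunc.C π * RatFunc.X) :
    ∃ b : Module.Basis (Fin q) (IntermediateField.adjoin L {w}) (RatFunc L),
      ∀ i : Fin q, b i = RatFunc.X ^ (i : ℕ) := by
  classical
  have hw' : w = algebraMap L[X] (RatFunc L) ((X : L[X]) ^ q + C π * X) := by
    rw [hw, map_add, map_mul, map_pow, RatFunc.algebraMap_C, RatFunc.algebraMap_X]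
  have haev : ∀ p : L[X], Polynomial.aeval w p
      = algebraMap L[X] (RatFunc L) (p.comp ((X : L[X]) ^ q + C π * X)) := by
    intro p
    rw [hw', Polynomial.aeval_algebraMap_apply]
    congr 1
  have hinj : Function.Injective (Polynomial.aeval w : L[X] →ₐ[L] RatFunc L) := by
    rw [injective_iff_map_eq_zero]
    intro p hp
    rw [haev] at hp
    by_contra hp0
    exact comp_w0_ne_zero π hq hp0 ((map_eq_zero_iff _ (RatFunc.algebraMap_injective L)).mp hp)
  set φ : RatFunc L →ₐ[L] RatFunc L :=
    RatFunc.liftAlgHom (Polynomial.aeval w)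
      (nonZeroDivisors_le_comap_nonZeroDivisors_of_injective _ hinj) with hφdef
  have hφa : ∀ p : L[X], φ (algebraMap L[X] (RatFunc L) p)
      = algebraMap L[X] (RatFunc L) (p.comp ((X : L[X]) ^ q + C π * X)) := by
    intro p
    have h1 := RatFunc.liftAlgHom_apply_div (Polynomial.aeval w)
      (nonZeroDivisors_le_comap_nonZeroDivisors_of_injective _ hinj) p 1
    simpa [haev] using h1
  have hφX : φ RatFunc.X = w := by
    rw [← RatFunc.algebraMap_X, hφa, Polynomial.X_comp]
    exact hw'.symm
  have hmem : ∀ g : IntermediateField.adjoin L {w}, ∃ r : RatFunc L, φ r = (g : RatFunc L) := by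
    intro g
    have hle : IntermediateField.adjoin L {w} ≤ φ.fieldRange := by
      apply IntermediateField.adjoin_le_iff.mpr
      rintro x rfl
      exact ⟨RatFunc.X, hφX⟩
    exact hle g.2
  -- linear independence
  have hli : LinearIndependent (IntermediateField.adjoin L {w}) (fun i : Fin q => (RatFunc.X : RatFunc L) ^ (i : ℕ)) := by
    rw [Fintype.linearIndependent_iff]
    intro g hg i
    choose r hr using fun j => hmem (g j)
    have hdne : ∀ j : Fin q, (r j).denom ≠ 0 := fun j => RatFunc.denom_ne_zero _
    set d : L[X] := ∏ j : Fin q, (r j).denom with hd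
    set N : Fin q → L[X] :=
      fun j => (r j).num * ∏ k ∈ Finset.univ.erase j, (r k).denom with hN
    have hdr : ∀ j, algebraMap L[X] (RatFunc L) d * r j = algebraMap L[X] (RatFunc L) (N j) := by
      intro j
      have hdj : algebraMap L[X] (RatFunc L) (r j).denom ≠ 0 :=
        fun h => hdne j ((map_eq_zero_iff _ (RatFunc.algebraMap_injective L)).mp h)
      have h2 : r j * algebraMap L[X] (RatFunc L) (r j).denom
          = algebraMap L[X] (RatFunc L) (r j).num := by
        nth_rewrite 1 [← RatFunc.num_div_denom (r j)]
        rw [div_mul_cancel₀ _ hdj]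
      calc algebraMap L[X] (RatFunc L) d * r j
          = (r j * algebraMap L[X] (RatFunc L) (r j).denom)
            * algebraMap L[X] (RatFunc L) (∏ k ∈ Finset.univ.erase j, (r k).denom) := by
            rw [hd, ← Finset.mul_prod_erase _ _ (Finset.mem_univ j), map_mul]; ring
        _ = algebraMap L[X] (RatFunc L) (N j) := by rw [h2, hN, ← map_mul]
    have hg' : ∑ j : Fin q, (g j : RatFunc L) * RatFunc.X ^ (j : ℕ) = 0 := by
      rw [← hg]
      apply Finset.sum_congr rfl
      intro j _
      rw [Algebra.smul_def, IntermediateField.algebraMap_apply]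
    have hsum : ∑ j : Fin q,
        ((N j).comp ((X : L[X]) ^ q + C π * X)) * (X : L[X]) ^ (j : ℕ) = 0 := by
      apply RatFunc.algebraMap_injective L
      rw [map_zero, map_sum]
      have : ∀ j : Fin q, algebraMap L[X] (RatFunc L)
          ((N j).comp ((X : L[X]) ^ q + C π * X) * (X : L[X]) ^ (j : ℕ))
          = φ (algebraMap L[X] (RatFunc L) d) * ((g j : RatFunc L) * RatFunc.X ^ (j : ℕ)) := by
        intro j
        rw [map_mul, ← hφa, ← hdr j, map_mul, hr j, map_pow, RatFunc.algebraMap_X]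
        ring
      rw [Finset.sum_congr rfl (fun j _ => this j), ← Finset.mul_sum, hg', mul_zero]
    have hNz := core π hq N hsum i
    have hnum : (r i).num = 0 := by
      rw [hN] at hNz
      rcases mul_eq_zero.mp hNz with h | h
      · exact h
      · exact absurd h (Finset.prod_ne_zero_iff.mpr fun k _ => hdne k)
    have hri : r i = 0 := by
      rw [← RatFunc.num_div_denom (r i), hnum, map_zero, zero_div]
    have : (g i : RatFunc L) = 0 := by rw [← hr i, hri, map_zero]
    exact_mod_cast this
  -- spanning
  have hwK : w ∈ IntermediateField.adjoin L {w} := IntermediateField.subset_adjoin _ _ rfl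
  have hπK : RatFunc.C π ∈ IntermediateField.adjoin L {w} := by
    rw [← RatFunc.algebraMap_eq_C]
    exact IntermediateField.algebraMap_mem _ π
  set w' : IntermediateField.adjoin L {w} := ⟨w, hwK⟩
  set π' : IntermediateField.adjoin L {w} := ⟨RatFunc.C π, hπK⟩
  set pm : Polynomial (IntermediateField.adjoin L {w}) := X ^ q + C π' * X - C w' with hpm
  have hdeglt : (C π' * X - C w' : Polynomial (IntermediateField.adjoin L {w})).degree < ((X : Polynomial (IntermediateField.adjoin L {w})) ^ q).degree := by
    rw [degree_X_pow]
    calc (C π' * X - C w' : Polynomial (IntermediateField.adjoin L {w})).degree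
        ≤ max (C π' * X : Polynomial (IntermediateField.adjoin L {w})).degree (C w' : Polynomial (IntermediateField.adjoin L {w})).degree := degree_sub_le _ _
      _ ≤ max ((0 : WithBot ℕ) + 1) 0 := max_le_max
          ((degree_mul_le _ _).trans (add_le_add degree_C_le degree_X.le)) degree_C_le
      _ < (q : WithBot ℕ) := by
          rw [zero_add, max_eq_left (by norm_num : (0 : WithBot ℕ) ≤ 1)]
          exact_mod_cast (by omega : (1 : ℕ) < q)
  have hpm_monic : pm.Monic := by
    rw [hpm, add_sub_assoc]
    exact monic_X_pow_add (by rwa [degree_X_pow] at hdeglt)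
  have hpm_deg : pm.natDegree = q := by
    apply natDegree_eq_of_degree_eq_some
    rw [hpm, add_sub_assoc, degree_add_eq_left_of_degree_lt hdeglt, degree_X_pow]
  have haev0 : Polynomial.aeval (RatFunc.X : RatFunc L) pm = 0 := by
    rw [hpm]
    simp only [map_sub, map_add, map_mul, map_pow, Polynomial.aeval_X, Polynomial.aeval_C]
    have h1 : algebraMap (IntermediateField.adjoin L {w}) (RatFunc L) π' = RatFunc.C π := rfl
    have h2 : algebraMap (IntermediateField.adjoin L {w}) (RatFunc L) w' = w := rfl
    rw [h1, h2, hw]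
    ring
  have hint : IsIntegral (IntermediateField.adjoin L {w}) (RatFunc.X : RatFunc L) := ⟨pm, hpm_monic, haev0⟩
  have hadjK : IntermediateField.adjoin (IntermediateField.adjoin L {w}) {(RatFunc.X : RatFunc L)} = ⊤ := by
    rw [eq_top_iff]
    intro x _
    rw [← IntermediateField.mem_restrictScalars (K := L),
      IntermediateField.restrictScalars_adjoin]
    exact IntermediateField.adjoin.mono _ _ _ (Set.subset_union_right) (mem_adjoin_X x)
  have htop : Algebra.adjoin (IntermediateField.adjoin L {w}) {(RatFunc.X : RatFunc L)} = ⊤ := by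
    have h1 := IntermediateField.adjoin_simple_toSubalgebra_of_isAlgebraic hint.isAlgebraic
    rw [hadjK, IntermediateField.top_toSubalgebra] at h1
    exact h1.symm
  have hspan := Submodule.span_range_natDegree_eq_adjoin (R := IntermediateField.adjoin L {w}) (A := RatFunc L)
    hpm_monic haev0
  rw [hpm_deg, htop, Algebra.top_toSubmodule] at hspan
  have hrange : Set.range (fun i : Fin q => (RatFunc.X : RatFunc L) ^ (i : ℕ))
      = ↑(Finset.image ((RatFunc.X : RatFunc L) ^ ·) (Finset.range q)) := by
    ext f
    simp only [Set.mem_range, Finset.coe_image, Finset.coe_range, Set.mem_image, Set.mem_Iio]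
    exact ⟨fun ⟨i, h⟩ => ⟨i, i.isLt, h⟩, fun ⟨a, ha, h⟩ => ⟨⟨a, ha⟩, h⟩⟩
  have hsp : ⊤ ≤ Submodule.span (IntermediateField.adjoin L {w}) (Set.range (fun i : Fin q => (RatFunc.X : RatFunc L) ^ (i : ℕ))) := by
    rw [hrange, hspan]
  exact ⟨Module.Basis.mk hli hsp, fun i => Module.Basis.mk_apply hli hsp i⟩


lemma trace_rec {q : ℕ} (hq : 2 ≤ q) (π : L) (w : RatFunc L)
    (hw : w = RatFunc.X ^ q + RatFunc.C π * RatFunc.X) (ℓ : ℕ) (hℓ : q ≤ ℓ) :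
    ((Algebra.trace (IntermediateField.adjoin L {w}) (RatFunc L)
        ((RatFunc.X : RatFunc L) ^ ℓ) : IntermediateField.adjoin L {w}) : RatFunc L)
      = w * ((Algebra.trace (IntermediateField.adjoin L {w}) (RatFunc L)
          ((RatFunc.X : RatFunc L) ^ (ℓ - q)) : IntermediateField.adjoin L {w}) : RatFunc L)
        - RatFunc.C π * ((Algebra.trace (IntermediateField.adjoin L {w}) (RatFunc L)
          ((RatFunc.X : RatFunc L) ^ (ℓ - q + 1)) : IntermediateField.adjoin L {w}) : RatFunc L) := by
  have hwK : w ∈ IntermediateField.adjoin L {w} := IntermediateField.subset_adjoin _ _ rfl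
  have hπK : RatFunc.C π ∈ IntermediateField.adjoin L {w} := by
    rw [← RatFunc.algebraMap_eq_C]; exact IntermediateField.algebraMap_mem _ π
  set w' : IntermediateField.adjoin L {w} := ⟨w, hwK⟩ with hw'def
  set π' : IntermediateField.adjoin L {w} := ⟨RatFunc.C π, hπK⟩ with hπ'def
  have hXq : (RatFunc.X : RatFunc L) ^ q = w - RatFunc.C π * RatFunc.X := by rw [hw]; ring
  have hXpow : (RatFunc.X : RatFunc L) ^ ℓ
      = w' • (RatFunc.X : RatFunc L) ^ (ℓ - q) - π' • (RatFunc.X : RatFunc L) ^ (ℓ - q + 1) := by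
    rw [Algebra.smul_def, Algebra.smul_def, IntermediateField.algebraMap_apply,
      IntermediateField.algebraMap_apply]
    have h1 : (RatFunc.X : RatFunc L) ^ ℓ = RatFunc.X ^ (ℓ - q) * RatFunc.X ^ q := by
      rw [← pow_add]; congr 1; omega
    rw [h1, hXq]
    have h2 : ((w' : RatFunc L)) = w := rfl
    have h3 : ((π' : RatFunc L)) = RatFunc.C π := rfl
    rw [h2, h3, pow_succ]
    ring
  rw [hXpow, map_sub, map_smul, map_smul, smul_eq_mul, smul_eq_mul]
  push_cast
  rfl

lemma trace_base {q : ℕ} (hq : 2 ≤ q) (π : L) (w : RatFunc L)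
    (hw : w = RatFunc.X ^ q + RatFunc.C π * RatFunc.X) (ℓ : ℕ) (hℓ : ℓ < q) :
    ((Algebra.trace (IntermediateField.adjoin L {w}) (RatFunc L)
        ((RatFunc.X : RatFunc L) ^ ℓ) : IntermediateField.adjoin L {w}) : RatFunc L)
      = if ℓ = 0 then (q : RatFunc L)
        else if ℓ = q - 1 then -(((q : RatFunc L) - 1) * RatFunc.C π) else 0 := by
  classical
  obtain ⟨b, hb⟩ := exists_basis hq π w hw
  have hwK : w ∈ IntermediateField.adjoin L {w} := IntermediateField.subset_adjoin _ _ rfl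
  have hπK : RatFunc.C π ∈ IntermediateField.adjoin L {w} := by
    rw [← RatFunc.algebraMap_eq_C]; exact IntermediateField.algebraMap_mem _ π
  set w' : IntermediateField.adjoin L {w} := ⟨w, hwK⟩ with hw'def
  set π' : IntermediateField.adjoin L {w} := ⟨RatFunc.C π, hπK⟩ with hπ'def
  have hXq : (RatFunc.X : RatFunc L) ^ q = w - RatFunc.C π * RatFunc.X := by rw [hw]; ring
  have hrepr1 : ∀ (n : ℕ) (hn : n < q),
      b.repr ((RatFunc.X : RatFunc L) ^ n) = Finsupp.single ⟨n, hn⟩ 1 := by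
    intro n hn
    rw [← hb ⟨n, hn⟩]
    exact b.repr_self _
  have hXpow : ∀ n : ℕ, q ≤ n → (RatFunc.X : RatFunc L) ^ n
      = w' • (RatFunc.X : RatFunc L) ^ (n - q) - π' • (RatFunc.X : RatFunc L) ^ (n - q + 1) := by
    intro n hn
    rw [Algebra.smul_def, Algebra.smul_def, IntermediateField.algebraMap_apply,
      IntermediateField.algebraMap_apply]
    have h1 : (RatFunc.X : RatFunc L) ^ n = RatFunc.X ^ (n - q) * RatFunc.X ^ q := by
      rw [← pow_add]; congr 1; omega
    have h2 : ((w' : RatFunc L)) = w := rfl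
    have h3 : ((π' : RatFunc L)) = RatFunc.C π := rfl
    rw [h1, hXq, h2, h3, pow_succ]
    ring
  have hrepr2 : ∀ (n : ℕ), q ≤ n → ∀ (h1 : n - q < q) (h2 : n - q + 1 < q) (j : Fin q),
      b.repr ((RatFunc.X : RatFunc L) ^ n) j
        = (if (j : ℕ) = n - q then w' else 0) - (if (j : ℕ) = n - q + 1 then π' else 0) := by
    intro n hn h1 h2 j
    rw [hXpow n hn, map_sub, map_smul, map_smul, hrepr1 _ h1, hrepr1 _ h2]
    simp only [Finsupp.coe_sub, Pi.sub_apply, Finsupp.smul_apply, Finsupp.single_apply,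
      Fin.ext_iff]
    simp [eq_comm, smul_eq_mul]
  have htr : Algebra.trace (IntermediateField.adjoin L {w}) (RatFunc L)
      ((RatFunc.X : RatFunc L) ^ ℓ)
      = ∑ j : Fin q, b.repr ((RatFunc.X : RatFunc L) ^ (ℓ + (j : ℕ))) j := by
    rw [Algebra.trace_eq_matrix_trace b, Matrix.trace]
    apply Finset.sum_congr rfl
    intro j _
    rw [Matrix.diag_apply, Algebra.leftMulMatrix_eq_repr_mul, hb j, ← pow_add]
  by_cases h0 : ℓ = 0
  · subst h0
    rw [if_pos rfl, htr]
    have : ∀ j : Fin q, b.repr ((RatFunc.X : RatFunc L) ^ (0 + (j : ℕ))) j = 1 := by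
      intro j
      rw [zero_add, hrepr1 _ j.isLt]
      simp [Finsupp.single_apply]
    rw [Finset.sum_congr rfl (fun j _ => this j)]
    simp
  · rw [if_neg h0]
    by_cases h1 : ℓ = q - 1
    · subst h1
      rw [if_pos rfl, htr]
      have hval : ∀ j : Fin q, b.repr ((RatFunc.X : RatFunc L) ^ (q - 1 + (j : ℕ))) j
          = if (j : ℕ) = 0 then 0 else -π' := by
        intro j
        by_cases hj : (j : ℕ) = 0
        · rw [if_pos hj]
          have hlt : q - 1 + (j : ℕ) < q := by omega
          rw [hrepr1 _ hlt, Finsupp.single_apply, if_neg]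
          intro hc
          have hc2 : q - 1 + (j : ℕ) = (j : ℕ) := by
            simpa [Fin.ext_iff] using hc
          omega
        · rw [if_neg hj]
          have hge : q ≤ q - 1 + (j : ℕ) := by omega
          have hl1 : q - 1 + (j : ℕ) - q < q := by have := j.isLt; omega
          have hl2 : q - 1 + (j : ℕ) - q + 1 < q := by have := j.isLt; omega
          rw [hrepr2 _ hge hl1 hl2 j]
          have c1 : ¬((j : ℕ) = q - 1 + (j : ℕ) - q) := by omega
          have c2 : (j : ℕ) = q - 1 + (j : ℕ) - q + 1 := by omega
          rw [if_neg c1, if_pos c2, zero_sub]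
      rw [Finset.sum_congr rfl (fun j _ => hval j)]
      have hj0 : (⟨0, by omega⟩ : Fin q) ∈ Finset.univ := Finset.mem_univ _
      rw [← Finset.add_sum_erase _ _ hj0]
      have hz : (((⟨0, by omega⟩ : Fin q)) : ℕ) = 0 := rfl
      rw [if_pos hz, zero_add]
      have hconst : ∀ j ∈ Finset.univ.erase (⟨0, by omega⟩ : Fin q),
          (if (j : ℕ) = 0 then (0 : IntermediateField.adjoin L {w}) else -π') = -π' := by
        intro j hj
        rw [if_neg]
        intro hc
        exact (Finset.mem_erase.mp hj).1 (Fin.ext hc)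
      rw [Finset.sum_congr rfl hconst, Finset.sum_const,
        Finset.card_erase_of_mem (Finset.mem_univ _), Finset.card_univ, Fintype.card_fin,
        nsmul_eq_mul]
      have hexp : ((((q - 1 : ℕ) : IntermediateField.adjoin L {w}) * (-π')
          : IntermediateField.adjoin L {w}) : RatFunc L)
          = ((q - 1 : ℕ) : RatFunc L) * (-(RatFunc.C π)) := by
        push_cast
        ring
      rw [hexp, Nat.cast_sub (by omega : 1 ≤ q)]
      push_cast
      ring
    · rw [if_neg h1, htr]
      have hval : ∀ j : Fin q, b.repr ((RatFunc.X : RatFunc L) ^ (ℓ + (j : ℕ))) j = 0 := by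
        intro j
        by_cases hj : ℓ + (j : ℕ) < q
        · rw [hrepr1 _ hj, Finsupp.single_apply, if_neg]
          intro hc
          have hc2 : ℓ + (j : ℕ) = (j : ℕ) := by
            simpa [Fin.ext_iff] using hc
          omega
        · have hge : q ≤ ℓ + (j : ℕ) := by omega
          have hl1 : ℓ + (j : ℕ) - q < q := by have := j.isLt; omega
          have hl2 : ℓ + (j : ℕ) - q + 1 < q := by have := j.isLt; omega
          rw [hrepr2 _ hge hl1 hl2 j]
          have c1 : ¬((j : ℕ) = ℓ + (j : ℕ) - q) := by omega
          have c2 : ¬((j : ℕ) = ℓ + (j : ℕ) - q + 1) := by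
            have := j.isLt
            intro hc
            apply h1
            omega
          rw [if_neg c1, if_neg c2, sub_zero]
      rw [Finset.sum_congr rfl (fun j _ => hval j)]
      simp


lemma vnat (vπ : L → EReal) (hv0 : vπ 0 = ⊤) (hv1 : vπ 1 = 0)
    (hvadd : ∀ x y : L, min (vπ x) (vπ y) ≤ vπ (x + y)) :
    ∀ n : ℕ, (0 : EReal) ≤ vπ (n : L) := by
  intro n
  induction n with
  | zero => rw [Nat.cast_zero, hv0]; exact le_top
  | succ k ih =>
    have h := hvadd (k : L) 1
    rw [Nat.cast_succ]
    exact le_trans (le_min ih hv1.ge) h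

lemma vneg (vπ : L → EReal) (hv1 : vπ 1 = 0)
    (hvmul : ∀ x y : L, vπ (x * y) = vπ x + vπ y) (x : L) : vπ (-x) = vπ x := by
  have hm1 : vπ (-1 : L) = 0 := by
    have h := hvmul (-1) (-1)
    rw [neg_mul_neg, one_mul, hv1] at h
    generalize hv : vπ (-1 : L) = v at h ⊢
    induction v using EReal.rec with
    | bot => simp at h
    | coe r =>
      have h2 : r + r = 0 := by exact_mod_cast h.symm
      have h3 : r = 0 := by linarith
      rw [h3]; rfl
    | top => simp at h
  rw [show -x = (-1 : L) * x by ring, hvmul, hm1, zero_add]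

lemma vfin (vπ : L → EReal) (hv1 : vπ 1 = 0)
    (hvmul : ∀ x y : L, vπ (x * y) = vπ x + vπ y) {x : L} (hx : x ≠ 0) :
    ∃ r : ℝ, vπ x = (r : EReal) := by
  have h := hvmul x x⁻¹
  rw [mul_inv_cancel₀ hx, hv1] at h
  generalize hv : vπ x = v at h ⊢
  induction v using EReal.rec with
  | bot => rw [EReal.bot_add] at h; simp at h
  | coe r => exact ⟨r, rfl⟩
  | top =>
    generalize hv2 : vπ x⁻¹ = v2 at h
    induction v2 using EReal.rec with
    | bot => simp at h
    | coe s => rw [EReal.top_add_coe] at h; simp at h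
    | top => simp at h

lemma main_aux (vπ : L → EReal)
    (hv0 : vπ 0 = ⊤) (hv1 : vπ 1 = 0)
    (hvmul : ∀ x y : L, vπ (x * y) = vπ x + vπ y)
    (hvadd : ∀ x y : L, min (vπ x) (vπ y) ≤ vπ (x + y))
    {q : ℕ} (hq : 2 ≤ q) (π : L) (hπ : vπ π = 1)
    (hvq : (1 : EReal) ≤ vπ ((q : L)))
    (w : RatFunc L) (hw : w = RatFunc.X ^ q + RatFunc.C π * RatFunc.X) (ℓ : ℕ) :
    ∃ a : ℕ → L,
      ((Algebra.trace (IntermediateField.adjoin L {w}) (RatFunc L)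
          ((RatFunc.X : RatFunc L) ^ ℓ) : IntermediateField.adjoin L {w}) : RatFunc L)
        = ∑ i ∈ Finset.range (ℓ / q + 1), RatFunc.C (a i) * w ^ i ∧
      (∀ i ∈ Finset.range (ℓ / q + 1),
        ((((ℓ / q : ℕ) : ℝ) + 1 - (i : ℝ) : ℝ) : EReal) ≤ vπ (a i)) ∧
      (∀ i, i ∉ Finset.range (ℓ / q + 1) → a i = 0) := by
  induction ℓ using Nat.strong_induction_on with
  | _ ℓ IH =>
  rcases lt_or_ge ℓ q with hlt | hge
  · have hm : ℓ / q = 0 := Nat.div_eq_of_lt hlt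
    by_cases h0 : ℓ = 0
    · subst h0
      refine ⟨fun i => if i = 0 then (q : L) else 0, ?_, ?_, ?_⟩
      · rw [trace_base hq π w hw 0 (by omega), if_pos rfl, hm, Finset.sum_range_one]
        simp [map_natCast]
      · intro i hi
        rw [hm] at hi
        simp only [Finset.mem_range] at hi
        have hi0 : i = 0 := by omega
        subst hi0
        show ((((0 / q : ℕ) : ℝ) + 1 - ((0 : ℕ) : ℝ) : ℝ) : EReal) ≤ vπ (if 0 = 0 then (q : L) else 0)
        rw [if_pos rfl, hm]
        norm_num
        exact_mod_cast hvq
      · intro i hi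
        rw [hm] at hi
        simp only [Finset.mem_range] at hi
        have hi0 : ¬(i = 0) := by omega
        show (if i = 0 then (q : L) else 0) = 0
        rw [if_neg hi0]
    · by_cases h1 : ℓ = q - 1
      · refine ⟨fun i => if i = 0 then -(((q : L) - 1) * π) else 0, ?_, ?_, ?_⟩
        · rw [trace_base hq π w hw ℓ hlt, if_neg h0, if_pos h1, hm, Finset.sum_range_one]
          simp [map_natCast, map_neg, map_mul, map_sub, map_one]
        · intro i hi
          rw [hm] at hi
          simp only [Finset.mem_range] at hi
          have hi0 : i = 0 := by omega
          subst hi0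
          show ((((ℓ / q : ℕ) : ℝ) + 1 - ((0 : ℕ) : ℝ) : ℝ) : EReal)
            ≤ vπ (if 0 = 0 then -(((q : L) - 1) * π) else 0)
          rw [if_pos rfl, hm]
          rw [vneg vπ hv1 hvmul, hvmul, hπ]
          have hcast : ((q : L) - 1) = ((q - 1 : ℕ) : L) := by
            rw [Nat.cast_sub (by omega : 1 ≤ q)]; push_cast; ring
          rw [hcast]
          have h2 := vnat vπ hv0 hv1 hvadd (q - 1)
          norm_num
          calc (1 : EReal) = 0 + 1 := by norm_num
          _ ≤ vπ ((q - 1 : ℕ) : L) + 1 := by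
              apply add_le_add_left h2
        · intro i hi
          rw [hm] at hi
          simp only [Finset.mem_range] at hi
          have hi0 : ¬(i = 0) := by omega
          show (if i = 0 then -(((q : L) - 1) * π) else 0) = 0
          rw [if_neg hi0]
      · refine ⟨fun _ => 0, ?_, ?_, ?_⟩
        · rw [trace_base hq π w hw ℓ hlt, if_neg h0, if_neg h1, hm]
          simp
        · intro i hi
          rw [hv0]
          exact le_top
        · intro i hi; rfl
  · -- recursive case
    have hd1 : ℓ - q < ℓ := by omega
    have hd2 : ℓ - q + 1 < ℓ := by omega
    obtain ⟨a₁, he₁, hb₁, hz₁⟩ := IH _ hd1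
    obtain ⟨a₂, he₂, hb₂, hz₂⟩ := IH _ hd2
    have heq : ℓ / q = (ℓ - q) / q + 1 := Nat.div_eq_sub_div (by omega) hge
    have hm1 : (ℓ - q) / q = ℓ / q - 1 := by rw [heq, Nat.add_sub_cancel]
    have hm0 : 1 ≤ ℓ / q := by rw [heq]; omega
    have hm2a : ℓ / q - 1 ≤ (ℓ - q + 1) / q := by
      rw [← hm1]
      exact Nat.div_le_div_right (by omega)
    have hm2b : (ℓ - q + 1) / q ≤ ℓ / q := Nat.div_le_div_right (by omega)
    refine ⟨fun i => (if i = 0 then 0 else a₁ (i - 1)) - π * a₂ i, ?_, ?_, ?_⟩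
    · rw [trace_rec hq π w hw ℓ hge, he₁, he₂]
      have hs1 : w * ∑ i ∈ Finset.range ((ℓ - q) / q + 1), RatFunc.C (a₁ i) * w ^ i
          = ∑ i ∈ Finset.range ((ℓ - q) / q + 1 + 1),
              RatFunc.C (if i = 0 then (0 : L) else a₁ (i - 1)) * w ^ i := by
        rw [Finset.sum_range_succ'
          (fun i => RatFunc.C (if i = 0 then (0 : L) else a₁ (i - 1)) * w ^ i)
          ((ℓ - q) / q + 1), Finset.mul_sum]
        simp only [Nat.succ_ne_zero, if_false, Nat.add_sub_cancel, eq_self_iff_true, if_true,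
          map_zero, zero_mul, add_zero]
        apply Finset.sum_congr rfl
        intro i _
        rw [pow_succ]
        ring
      have hs2 : ∑ i ∈ Finset.range ((ℓ - q + 1) / q + 1), RatFunc.C (a₂ i) * w ^ i
          = ∑ i ∈ Finset.range (ℓ / q + 1), RatFunc.C (a₂ i) * w ^ i := by
        apply Finset.sum_subset (Finset.range_subset_range.mpr (by omega))
        intro i _ hi
        rw [hz₂ i hi, map_zero, zero_mul]
      rw [hs1, hs2, show ℓ / q + 1 = (ℓ - q) / q + 1 + 1 by omega, Finset.mul_sum,
        ← Finset.sum_sub_distrib]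
      apply Finset.sum_congr rfl
      intro i _
      show RatFunc.C (if i = 0 then (0 : L) else a₁ (i - 1)) * w ^ i
          - RatFunc.C π * (RatFunc.C (a₂ i) * w ^ i)
        = RatFunc.C ((if i = 0 then (0 : L) else a₁ (i - 1)) - π * a₂ i) * w ^ i
      rw [map_sub, map_mul]
      ring
    · intro i hi
      simp only [Finset.mem_range] at hi
      have hile : i ≤ ℓ / q := by omega
      show ((((ℓ / q : ℕ) : ℝ) + 1 - (i : ℝ) : ℝ) : EReal)
        ≤ vπ ((if i = 0 then 0 else a₁ (i - 1)) - π * a₂ i)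
      have hmin : min (vπ (if i = 0 then 0 else a₁ (i - 1))) (vπ (π * a₂ i))
          ≤ vπ ((if i = 0 then 0 else a₁ (i - 1)) - π * a₂ i) := by
        rw [sub_eq_add_neg]
        have h := hvadd (if i = 0 then 0 else a₁ (i - 1)) (-(π * a₂ i))
        rwa [vneg vπ hv1 hvmul] at h
      refine le_trans (le_min ?_ ?_) hmin
      · by_cases hi0 : i = 0
        · rw [if_pos hi0, hv0]; exact le_top
        · rw [if_neg hi0]
          have hi1 : i - 1 ∈ Finset.range ((ℓ - q) / q + 1) := by
            simp only [Finset.mem_range]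
            omega
          refine le_trans ?_ (hb₁ _ hi1)
          apply EReal.coe_le_coe_iff.mpr
          have c1 : (((ℓ - q) / q : ℕ) : ℝ) = ((ℓ / q : ℕ) : ℝ) - 1 := by
            rw [hm1, Nat.cast_sub hm0]; push_cast; ring
          have c2 : ((i - 1 : ℕ) : ℝ) = (i : ℝ) - 1 := by
            rw [Nat.cast_sub (by omega : 1 ≤ i)]; push_cast; ring
          rw [c1, c2]
          linarith
      · rw [hvmul, hπ]
        by_cases hi2 : i ∈ Finset.range ((ℓ - q + 1) / q + 1)
        · have hb := hb₂ i hi2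
          calc ((((ℓ / q : ℕ) : ℝ) + 1 - (i : ℝ) : ℝ) : EReal)
              ≤ ((1 : ℝ) : EReal) + (((((ℓ - q + 1) / q : ℕ) : ℝ) + 1 - (i : ℝ) : ℝ) : EReal) := by
                rw [← EReal.coe_add]
                apply EReal.coe_le_coe_iff.mpr
                have h3 : ((ℓ / q : ℕ) : ℝ) ≤ (((ℓ - q + 1) / q : ℕ) : ℝ) + 1 := by
                  have h4 : ℓ / q ≤ (ℓ - q + 1) / q + 1 := by omega
                  exact_mod_cast h4
                linarith
          _ ≤ 1 + vπ (a₂ i) := by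
                rw [EReal.coe_one]
                exact add_le_add_right hb 1
        · rw [hz₂ i hi2, hv0]
          have htop : (1 : EReal) + ⊤ = ⊤ := by
            rw [← EReal.coe_one, EReal.coe_add_top]
          rw [htop]
          exact le_top
    · intro i hi
      simp only [Finset.mem_range, not_lt] at hi
      have h1 : a₁ (i - 1) = 0 := by
        apply hz₁
        simp only [Finset.mem_range, not_lt]
        omega
      have h2 : a₂ i = 0 := by
        apply hz₂
        simp only [Finset.mem_range, not_lt]
        omega
      show (if i = 0 then (0 : L) else a₁ (i - 1)) - π * a₂ i = 0
      rw [h2, mul_zero, sub_zero]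
      by_cases hi0 : i = 0
      · rw [if_pos hi0]
      · rw [if_neg hi0, h1]

end Stmt4Aux

/-- `L` is a finite extension of `F` (encoded: a characteristic-zero field with an
additive valuation `vπ` normalized by `vπ π = 1`, for which `vπ q ≥ 1` since `q` is the residue
cardinality of `O_F` and `π` a uniformizer).  In `L(u)` set `w := u^q + π u` and let `Tr` be the
trace of the degree-`q` extension `L(w) ⊆ L(u)`.  For every `ℓ ≥ 0`, `q⁻¹ Tr(u^ℓ)` is a
polynomial in `w` of degree at most `⌊ℓ/q⌋`: `q⁻¹ Tr(u^ℓ) = ∑_{i=0}^{⌊ℓ/q⌋} a i * w^i` with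
`vπ (a i) ≥ ⌊ℓ/q⌋ + 1 - i - vπ q` for every `i`. -/
theorem stmt_4
    (L : Type*) [Field L] [CharZero L]
    (vπ : L → EReal)
    (hv0 : vπ 0 = ⊤) (hv1 : vπ 1 = 0)
    (hvmul : ∀ x y : L, vπ (x * y) = vπ x + vπ y)
    (hvadd : ∀ x y : L, min (vπ x) (vπ y) ≤ vπ (x + y))
    (q : ℕ) (hq : 2 ≤ q) (π : L) (hπ : vπ π = 1)
    (hvq : (1 : EReal) ≤ vπ ((q : L)))
    (w : RatFunc L) (hw : w = RatFunc.X ^ q + RatFunc.C π * RatFunc.X)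
    (ℓ : ℕ) :
    ∃ a : ℕ → L,
      ((q : RatFunc L))⁻¹ *
          ((Algebra.trace (IntermediateField.adjoin L {w}) (RatFunc L)
              ((RatFunc.X : RatFunc L) ^ ℓ) : IntermediateField.adjoin L {w}) : RatFunc L)
        = ∑ i ∈ Finset.range (ℓ / q + 1), RatFunc.C (a i) * w ^ i ∧
      ∀ i ∈ Finset.range (ℓ / q + 1),
        ((((ℓ / q : ℕ) : ℝ) + 1 - (i : ℝ) : ℝ) : EReal) - vπ ((q : L)) ≤ vπ (a i) := by
  obtain ⟨a, he, hb, -⟩ := Stmt4Aux.main_aux vπ hv0 hv1 hvmul hvadd hq π hπ hvq w hw ℓ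
  have hqL : (q : L) ≠ 0 := Nat.cast_ne_zero.mpr (by omega)
  obtain ⟨r, hr⟩ := Stmt4Aux.vfin vπ hv1 hvmul hqL
  have hrinv : vπ ((q : L))⁻¹ = ((-r : ℝ) : EReal) := by
    have h := hvmul (q : L) ((q : L))⁻¹
    rw [mul_inv_cancel₀ hqL, hv1, hr] at h
    generalize hv2 : vπ ((q : L))⁻¹ = v2 at h ⊢
    induction v2 using EReal.rec with
    | bot => simp at h
    | coe s =>
      have h2 : r + s = 0 := by exact_mod_cast h.symm
      have h3 : s = -r := by linarith
      rw [h3]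
    | top => rw [EReal.coe_add_top] at h; simp at h
  refine ⟨fun i => a i * ((q : L))⁻¹, ?_, ?_⟩
  · rw [he, Finset.mul_sum]
    apply Finset.sum_congr rfl
    intro i _
    show (q : RatFunc L)⁻¹ * (RatFunc.C (a i) * w ^ i) = RatFunc.C (a i * ((q : L))⁻¹) * w ^ i
    rw [map_mul, map_inv₀, map_natCast]
    ring
  · intro i hi
    have hb' := hb i hi
    show ((((ℓ / q : ℕ) : ℝ) + 1 - (i : ℝ) : ℝ) : EReal) - vπ ((q : L))
      ≤ vπ (a i * ((q : L))⁻¹)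
    rw [hvmul, hrinv, hr, sub_eq_add_neg, ← EReal.coe_neg]
    exact add_le_add_left hb' _
end

section
/- For every polynomial f ∈ O_L[u] with coefficients in the ring of integers O_L of L, the element π^{−1}·Tr(f) is a polynomial in w with all coefficients in O_L. (Equivalently: for the special Lubin–Tate group, ψ = q^{−1}·φ_q^{−1}∘Tr maps O_L[u] into (π/q)·O_L[u].) -/
open Polynomial

set_option maxHeartbeats 1000000
set_option synthInstance.maxHeartbeats 1000000


lemma aux_rdeg {L : Type*} [Field L] {q : ℕ} (hq : 2 ≤ q) (π : L) :
    ((X : L[X]) ^ q + C π * X).natDegree = q ∧ ((X : L[X]) ^ q + C π * X).Monic := by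
  have h1 : ((C π * X : L[X])).degree < ((X : L[X]) ^ q).degree := by
    rw [degree_X_pow]
    refine lt_of_le_of_lt (degree_C_mul_X_le π) ?_
    exact_mod_cast by exact_mod_cast Nat.lt_of_lt_of_le one_lt_two hq
  constructor
  · rw [natDegree_add_eq_left_of_degree_lt h1, natDegree_X_pow]
  · exact (monic_X_pow q).add_of_left h1

lemma aux_indep {L : Type*} [Field L] {q : ℕ} (hq : 2 ≤ q) (π : L)
    (p : Fin q → L[X]) (hsum : ∑ i : Fin q, (p i).comp (X ^ q + C π * X) * X ^ (i : ℕ) = 0) :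
    ∀ i, p i = 0 := by
  classical
  set r : L[X] := X ^ q + C π * X with hr
  obtain ⟨hrd, hrm⟩ := aux_rdeg hq π
  rw [← hr] at hrd hrm
  by_contra hcon
  push_neg at hcon
  obtain ⟨i₁, hi₁⟩ := hcon
  set S : Finset (Fin q) := Finset.univ.filter (fun i => p i ≠ 0) with hS
  have hSne : S.Nonempty := ⟨i₁, by simp [hS, hi₁]⟩
  obtain ⟨i₀, hi₀S, hmax⟩ := S.exists_max_image (fun i => q * (p i).natDegree + (i : ℕ)) hSne
  have hp₀ : p i₀ ≠ 0 := by simpa [hS] using hi₀S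
  set N := q * (p i₀).natDegree + (i₀ : ℕ) with hN
  have key := congrArg (fun s => Polynomial.coeff s N) hsum
  simp only [Polynomial.finset_sum_coeff, Polynomial.coeff_zero] at key
  have hterm : ∀ i : Fin q, ((p i).comp r * X ^ (i : ℕ)).coeff N =
      if i = i₀ then (p i₀).leadingCoeff * r.leadingCoeff ^ (p i₀).natDegree else 0 := by
    intro i
    by_cases hpi : p i = 0
    · have hne : i ≠ i₀ := fun h => hp₀ (h ▸ hpi)
      simp [hpi, hne]
    have hiS : i ∈ S := by simp [hS, hpi]
    have hle : q * (p i).natDegree + (i : ℕ) ≤ N := hmax i hiS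
    have hcompdeg : ((p i).comp r).natDegree = q * (p i).natDegree := by
      rw [natDegree_comp, hrd, mul_comm]
    rw [coeff_mul_X_pow']
    by_cases hieq : i = i₀
    · subst hieq
      rw [if_pos rfl, if_pos (Nat.le_add_left _ _)]
      have h2 : N - (i : ℕ) = ((p i).comp r).natDegree := by
        rw [hcompdeg, hN]; omega
      rw [h2, Polynomial.coeff_natDegree, leadingCoeff_comp (by omega)]
    · rw [if_neg hieq]
      by_cases hle2 : (i : ℕ) ≤ N
      · rw [if_pos hle2]
        apply Polynomial.coeff_eq_zero_of_natDegree_lt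
        rw [hcompdeg]
        have hne : q * (p i).natDegree + (i : ℕ) ≠ N := by
          intro heq
          apply hieq
          have h1 : (q * (p i).natDegree + (i : ℕ)) % q = (i : ℕ) % q := by
            simp [Nat.mul_add_mod]
          have h2 : (q * (p i₀).natDegree + (i₀ : ℕ)) % q = (i₀ : ℕ) % q := by
            simp [Nat.mul_add_mod]
          rw [heq, hN] at h1
          rw [h1] at h2
          exact Fin.ext (by rwa [Nat.mod_eq_of_lt i.isLt, Nat.mod_eq_of_lt i₀.isLt] at h2)
        omega
      · rw [if_neg hle2]
  rw [Finset.sum_congr rfl (fun i _ => hterm i)] at key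
  simp only [Finset.sum_ite_eq', Finset.mem_univ, if_pos] at key
  rw [hrm.leadingCoeff, one_pow, mul_one] at key
  exact hp₀ (leadingCoeff_eq_zero.mp key)

section Setup

variable {L : Type*} [Field L] {q : ℕ} (hq : 2 ≤ q) (π : L) (w : RatFunc L)
  (hw : w = RatFunc.X ^ q + RatFunc.C π * RatFunc.X)

lemma aux_aevalX (p : L[X]) :
    Polynomial.aeval (RatFunc.X : RatFunc L) p = algebraMap (Polynomial L) (RatFunc L) p := by
  have : (RatFunc.X : RatFunc L) = (IsScalarTower.toAlgHom L (Polynomial L) (RatFunc L)) X := by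
    simp [RatFunc.algebraMap_X]
  rw [this, Polynomial.aeval_algHom_apply, Polynomial.aeval_X_left_apply]
  rfl

include hw in
lemma aux_w_eq : w = Polynomial.aeval (RatFunc.X : RatFunc L) (X ^ q + C π * X) := by
  rw [hw]
  simp [RatFunc.algebraMap_eq_C]

include hw in
lemma aux_aeval_w (p : L[X]) :
    Polynomial.aeval w p = Polynomial.aeval (RatFunc.X : RatFunc L) (p.comp (X ^ q + C π * X)) := by
  rw [aux_w_eq π w hw, Polynomial.aeval_comp]

lemma aux_aevalX_inj :
    Function.Injective (Polynomial.aeval (RatFunc.X : RatFunc L) : L[X] →ₐ[L] RatFunc L) := by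
  intro a b hab
  rw [aux_aevalX, aux_aevalX] at hab
  exact IsFractionRing.injective (Polynomial L) (RatFunc L) hab

include hq hw in
lemma aux_aeval_w_inj {p : L[X]} (h : Polynomial.aeval w p = 0) : p = 0 := by
  rw [aux_aeval_w π w hw, ← map_zero (Polynomial.aeval (RatFunc.X : RatFunc L) : L[X] →ₐ[L] RatFunc L)] at h
  have h2 := aux_aevalX_inj h
  by_contra hp
  have := aux_rdeg (L := L) hq π
  have hd : (p.comp (X ^ q + C π * X)).natDegree = p.natDegree * q := by
    rw [natDegree_comp, this.1]
  have : p.comp (X ^ q + C π * X) ≠ 0 := by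
    intro hc
    apply hp
    have hlc := leadingCoeff_comp (p := p) (q := (X ^ q + C π * X : L[X])) (by rw [this.1]; omega)
    rw [hc, leadingCoeff_zero, this.2.leadingCoeff, one_pow, mul_one] at hlc
    exact leadingCoeff_eq_zero.mp hlc.symm
  exact this h2

omit hw in
lemma aux_mem_adjoin (x : (IntermediateField.adjoin L {w})) :
    ∃ a b : L[X], b ≠ 0 ∧ (x : RatFunc L) = Polynomial.aeval w a / Polynomial.aeval w b := by
  obtain ⟨a, b, hab⟩ := (IntermediateField.mem_adjoin_simple_iff L (x : RatFunc L)).mp x.2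
  by_cases hb : b = 0
  · refine ⟨0, 1, one_ne_zero, ?_⟩
    rw [hab, hb]
    simp
  · exact ⟨a, b, hb, hab⟩

include hq hw in
lemma aux_li : LinearIndependent (IntermediateField.adjoin L {w})
    (fun i : Fin q => (RatFunc.X : RatFunc L) ^ (i : ℕ)) := by
  classical
  rw [Fintype.linearIndependent_iff]
  intro g hg j
  choose a b hb hab using fun i => aux_mem_adjoin w (g i)
  have hbw : ∀ i, Polynomial.aeval w (b i) ≠ 0 := by
    intro i hc
    exact hb i (aux_aeval_w_inj hq π w hw hc)
  set A : Fin q → L[X] := fun i => a i * ∏ k ∈ Finset.univ.erase i, b k with hA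
  set D : RatFunc L := ∏ i, Polynomial.aeval w (b i) with hD
  have hgD : ∀ i, (g i : RatFunc L) * D = Polynomial.aeval w (A i) := by
    intro i
    rw [hab i, hA, map_mul, map_prod, hD, ← Finset.mul_prod_erase _ _ (Finset.mem_univ i)]
    rw [div_mul_eq_mul_div, div_eq_iff (hbw i)]
    ring
  have hsum : Polynomial.aeval (RatFunc.X : RatFunc L)
      (∑ i : Fin q, (A i).comp (X ^ q + C π * X) * X ^ (i : ℕ)) = 0 := by
    push_cast [map_sum, map_mul, map_pow, Polynomial.aeval_X]
    have : ∀ i : Fin q, Polynomial.aeval (RatFunc.X : RatFunc L) ((A i).comp (X ^ q + C π * X))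
        = (g i : RatFunc L) * D := by
      intro i; rw [hgD i, aux_aeval_w π w hw]
    calc ∑ i : Fin q, Polynomial.aeval (RatFunc.X : RatFunc L) ((A i).comp (X ^ q + C π * X)) *
          (RatFunc.X : RatFunc L) ^ (i : ℕ)
        = (∑ i : Fin q, (g i : RatFunc L) * (RatFunc.X : RatFunc L) ^ (i : ℕ)) * D := by
          rw [Finset.sum_mul]
          refine Finset.sum_congr rfl fun i _ => ?_
          rw [this i]; ring
      _ = 0 := by
          have : (∑ i : Fin q, (g i : RatFunc L) * (RatFunc.X : RatFunc L) ^ (i : ℕ)) = 0 := by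
            rw [← hg]
            refine Finset.sum_congr rfl fun i _ => ?_
            rw [Algebra.smul_def, IntermediateField.algebraMap_apply]
          rw [this, zero_mul]
  have hA0 := aux_indep hq π A (aux_aevalX_inj (by rw [hsum, map_zero]))
  have haj : a j = 0 := by
    have := hA0 j
    rw [hA] at this
    rcases mul_eq_zero.mp this with h | h
    · exact h
    · exact absurd h (Finset.prod_ne_zero_iff.mpr fun k _ => hb k)
  have : (g j : RatFunc L) = 0 := by rw [hab j, haj, map_zero, zero_div]
  exact_mod_cast this



include hq hw in
lemma aux_pow_key (n : ℕ) (hn : q ≤ n) :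
    (RatFunc.X : RatFunc L) ^ n
      = (⟨w, IntermediateField.mem_adjoin_simple_self L w⟩ :
            IntermediateField.adjoin L {w}) • (RatFunc.X : RatFunc L) ^ (n - q)
        - (algebraMap L (IntermediateField.adjoin L {w}) π) •
            (RatFunc.X : RatFunc L) ^ (n - q + 1) := by
  set K := IntermediateField.adjoin L {w}
  set w' : K := ⟨w, IntermediateField.mem_adjoin_simple_self L w⟩ with hw'
  set π' : K := algebraMap L K π with hπ'
  rw [Algebra.smul_def, Algebra.smul_def, IntermediateField.algebraMap_apply,
    IntermediateField.algebraMap_apply]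
  have hco : ((π' : RatFunc L)) = RatFunc.C π := by
    show algebraMap K (RatFunc L) π' = RatFunc.C π
    rw [hπ', ← IsScalarTower.algebraMap_apply L K (RatFunc L), RatFunc.algebraMap_eq_C]
  have hcw : (w' : RatFunc L) = w := rfl
  rw [hco, hcw, hw]
  have hexp : n = (n - q) + q := by omega
  nth_rewrite 1 [hexp]
  rw [pow_add, pow_add, pow_one]
  ring

include hq hw in
lemma aux_pow_mem (n : ℕ) :
    (RatFunc.X : RatFunc L) ^ n ∈ Submodule.span (IntermediateField.adjoin L {w})
      (Set.range fun i : Fin q => (RatFunc.X : RatFunc L) ^ (i : ℕ)) := by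
  set K := IntermediateField.adjoin L {w}
  set S := Submodule.span K (Set.range fun i : Fin q => (RatFunc.X : RatFunc L) ^ (i : ℕ)) with hS
  induction n using Nat.strong_induction_on with
  | _ n ih =>
    by_cases hn : n < q
    · exact Submodule.subset_span ⟨⟨n, hn⟩, rfl⟩
    · push_neg at hn
      have key := aux_pow_key hq π w hw n hn
      rw [key]
      exact Submodule.sub_mem _ (Submodule.smul_mem _ _ (ih _ (by omega)))
        (Submodule.smul_mem _ _ (ih _ (by omega)))

include hq hw in
lemma aux_span : ⊤ ≤ Submodule.span (IntermediateField.adjoin L {w})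
    (Set.range fun i : Fin q => (RatFunc.X : RatFunc L) ^ (i : ℕ)) := by
  set K := IntermediateField.adjoin L {w} with hK
  set S := Submodule.span K (Set.range fun i : Fin q => (RatFunc.X : RatFunc L) ^ (i : ℕ)) with hS
  set w' : K := ⟨w, IntermediateField.mem_adjoin_simple_self L w⟩ with hw'
  set π' : K := algebraMap L K π with hπ'
  have hmon : ((X : K[X]) ^ q + C π' * X).Monic := (aux_rdeg hq π').2
  have hdeg : ((X : K[X]) ^ q + C π' * X).natDegree = q := (aux_rdeg hq π').1
  have hint : IsIntegral K (RatFunc.X : RatFunc L) := by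
    refine ⟨X ^ q + C π' * X - C w', ?_, ?_⟩
    · rw [sub_eq_add_neg]
      apply hmon.add_of_left
      rw [degree_eq_natDegree hmon.ne_zero, hdeg]
      refine lt_of_le_of_lt (degree_neg (C w') ▸ degree_C_le) ?_
      exact_mod_cast Nat.lt_of_lt_of_le Nat.zero_lt_two hq
    · rw [eval₂_sub, eval₂_add, eval₂_mul, eval₂_C, eval₂_C, eval₂_pow, eval₂_X]
      have h1 : algebraMap K (RatFunc L) π' = RatFunc.C π := by
        rw [hπ', ← IsScalarTower.algebraMap_apply L K (RatFunc L), RatFunc.algebraMap_eq_C]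
      have h2 : algebraMap K (RatFunc L) w' = w := rfl
      rw [h1, h2, hw]
      ring
  -- every element lies in K⟮X⟯
  have htop : IntermediateField.adjoin K {(RatFunc.X : RatFunc L)} = ⊤ := by
    rw [eq_top_iff]
    intro z _
    set T := IntermediateField.adjoin K {(RatFunc.X : RatFunc L)} with hT
    have halg : ∀ p : L[X], algebraMap (Polynomial L) (RatFunc L) p ∈ T := by
      intro p
      induction p using Polynomial.induction_on' with
      | add f g hfi hgi => rw [map_add]; exact add_mem hfi hgi
      | monomial n a =>
        rw [← C_mul_X_pow_eq_monomial, map_mul, map_pow, RatFunc.algebraMap_C,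
          RatFunc.algebraMap_X]
        have hC : (RatFunc.C a : RatFunc L) ∈ T := by
          have : (RatFunc.C a : RatFunc L) = algebraMap K (RatFunc L) (algebraMap L K a) := by
            rw [← IsScalarTower.algebraMap_apply L K (RatFunc L), RatFunc.algebraMap_eq_C]
          rw [this]
          exact T.algebraMap_mem _
        exact mul_mem hC (pow_mem (IntermediateField.mem_adjoin_simple_self K _) n)
    induction z using RatFunc.induction_on with
    | f p s hs => exact div_mem (halg p) (halg s)
  have hadj : Algebra.adjoin K {(RatFunc.X : RatFunc L)} = ⊤ := by
    rw [← IntermediateField.adjoin_simple_toSubalgebra_of_isAlgebraic hint.isAlgebraic, htop]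
    rfl
  intro z _
  have hz : z ∈ Algebra.adjoin K {(RatFunc.X : RatFunc L)} := by rw [hadj]; trivial
  rw [Algebra.adjoin_singleton_eq_range_aeval, AlgHom.mem_range] at hz
  obtain ⟨P, rfl⟩ := hz
  rw [Polynomial.aeval_eq_sum_range]
  exact Submodule.sum_mem _ fun i _ => Submodule.smul_mem _ _ (aux_pow_mem hq π w hw i)


noncomputable def auxB : Module.Basis (Fin q) (IntermediateField.adjoin L {w}) (RatFunc L) :=
  Module.Basis.mk (aux_li hq π w hw) (aux_span hq π w hw)

lemma auxB_apply (i : Fin q) : auxB hq π w hw i = (RatFunc.X : RatFunc L) ^ (i : ℕ) := by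
  rw [auxB, Module.Basis.mk_apply]

lemma aux_repr_low (m : ℕ) (hm : m < q) :
    (auxB hq π w hw).repr ((RatFunc.X : RatFunc L) ^ m)
      = Finsupp.single (⟨m, hm⟩ : Fin q) (1 : IntermediateField.adjoin L {w}) := by
  have h := (auxB hq π w hw).repr_self ⟨m, hm⟩
  rwa [auxB_apply] at h

lemma aux_repr_high (m : ℕ) (h1 : q ≤ m) (h2 : m < 2 * q - 1) :
    (auxB hq π w hw).repr ((RatFunc.X : RatFunc L) ^ m)
      = (⟨w, IntermediateField.mem_adjoin_simple_self L w⟩ :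
            IntermediateField.adjoin L {w}) •
          (Finsupp.single (⟨m - q, by omega⟩ : Fin q) (1 : IntermediateField.adjoin L {w}))
        - (algebraMap L (IntermediateField.adjoin L {w}) π) •
          (Finsupp.single (⟨m - q + 1, by omega⟩ : Fin q)
            (1 : IntermediateField.adjoin L {w})) := by
  rw [aux_pow_key hq π w hw m h1, map_sub, map_smul, map_smul,
    aux_repr_low hq π w hw (m - q) (by omega), aux_repr_low hq π w hw (m - q + 1) (by omega)]

include hq hw in
lemma aux_trace_eq_sum (x : RatFunc L) :
    Algebra.trace (IntermediateField.adjoin L {w}) (RatFunc L) x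
      = ∑ j : Fin q, (auxB hq π w hw).repr (x * (RatFunc.X : RatFunc L) ^ (j : ℕ)) j := by
  rw [Algebra.trace_eq_matrix_trace (auxB hq π w hw) x, Matrix.trace]
  refine Finset.sum_congr rfl fun j _ => ?_
  rw [Matrix.diag_apply, Algebra.leftMulMatrix_eq_repr_mul, auxB_apply]

include hq hw in
lemma aux_tr_zero :
    Algebra.trace (IntermediateField.adjoin L {w}) (RatFunc L) ((RatFunc.X : RatFunc L) ^ 0)
      = (q : IntermediateField.adjoin L {w}) := by
  rw [aux_trace_eq_sum hq π w hw]
  have h : ∀ j : Fin q, (auxB hq π w hw).repr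
      ((RatFunc.X : RatFunc L) ^ 0 * (RatFunc.X : RatFunc L) ^ (j : ℕ)) j = 1 := by
    intro j
    rw [pow_zero, one_mul, aux_repr_low hq π w hw j j.isLt, Fin.eta, Finsupp.single_eq_same]
  rw [Finset.sum_congr rfl fun j _ => h j]
  simp

include hq hw in
lemma aux_tr_mid (n : ℕ) (hn1 : 1 ≤ n) (hn2 : n < q - 1) :
    Algebra.trace (IntermediateField.adjoin L {w}) (RatFunc L) ((RatFunc.X : RatFunc L) ^ n)
      = 0 := by
  rw [aux_trace_eq_sum hq π w hw]
  refine Finset.sum_eq_zero fun j _ => ?_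
  have hjq := j.isLt
  rw [← pow_add]
  by_cases hcase : n + (j : ℕ) < q
  · rw [aux_repr_low hq π w hw _ hcase]
    exact Finsupp.single_eq_of_ne (by
      intro hc
      have := congrArg Fin.val hc
      simp only [Fin.val_mk] at this
      omega)
  · push_neg at hcase
    rw [aux_repr_high hq π w hw _ hcase (by omega)]
    rw [Finsupp.sub_apply, Finsupp.smul_apply, Finsupp.smul_apply]
    rw [Finsupp.single_eq_of_ne (by
      intro hc; have := congrArg Fin.val hc; simp only [Fin.val_mk] at this; omega)]
    rw [Finsupp.single_eq_of_ne (by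
      intro hc; have := congrArg Fin.val hc; simp only [Fin.val_mk] at this; omega)]
    simp

include hq hw in
lemma aux_tr_top :
    Algebra.trace (IntermediateField.adjoin L {w}) (RatFunc L) ((RatFunc.X : RatFunc L) ^ (q - 1))
      = -((q - 1 : ℕ) • (algebraMap L (IntermediateField.adjoin L {w}) π)) := by
  classical
  rw [aux_trace_eq_sum hq π w hw]
  have hterm : ∀ j : Fin q, (auxB hq π w hw).repr
      ((RatFunc.X : RatFunc L) ^ (q - 1) * (RatFunc.X : RatFunc L) ^ (j : ℕ)) j
      = if (j : ℕ) = 0 then 0 else -(algebraMap L (IntermediateField.adjoin L {w}) π) := by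
    intro j
    have hjq := j.isLt
    rw [← pow_add]
    by_cases hj : (j : ℕ) = 0
    · rw [hj, if_pos rfl, add_zero, aux_repr_low hq π w hw _ (by omega)]
      exact Finsupp.single_eq_of_ne (by
        intro hc; have := congrArg Fin.val hc; simp only [Fin.val_mk] at this; omega)
    · rw [if_neg hj]
      rw [aux_repr_high hq π w hw _ (by omega) (by omega)]
      rw [Finsupp.sub_apply, Finsupp.smul_apply, Finsupp.smul_apply]
      rw [Finsupp.single_eq_of_ne (by
        intro hc; have := congrArg Fin.val hc; simp only [Fin.val_mk] at this; omega)]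
      have heq : (⟨q - 1 + (j : ℕ) - q + 1, by omega⟩ : Fin q) = j := by
        apply Fin.ext; simp only [Fin.val_mk]; omega
      rw [heq, Finsupp.single_eq_same]
      simp
  rw [Finset.sum_congr rfl fun j _ => hterm j]
  rw [Finset.sum_ite, Finset.sum_const_zero, zero_add, Finset.sum_const]
  have hcard : (Finset.univ.filter fun j : Fin q => ¬((j : ℕ) = 0)).card = q - 1 := by
    haveI : NeZero q := ⟨by omega⟩
    have h0 : (Finset.univ.filter fun j : Fin q => ((j : ℕ) = 0)).card = 1 := by
      rw [Finset.card_eq_one]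
      refine ⟨0, ?_⟩
      ext j
      simp only [Finset.mem_filter, Finset.mem_univ, true_and, Finset.mem_singleton]
      exact ⟨fun h => Fin.ext (by simp [h]), fun h => by simp [h]⟩
    have := Finset.card_filter_add_card_filter_not
      (s := (Finset.univ : Finset (Fin q))) (p := fun j : Fin q => ((j : ℕ) = 0))
    rw [h0] at this
    simp only [Finset.card_univ, Fintype.card_fin] at this
    omega
  rw [hcard, smul_neg]

include hq hw in
lemma aux_tr_rec (n : ℕ) :
    Algebra.trace (IntermediateField.adjoin L {w}) (RatFunc L) ((RatFunc.X : RatFunc L) ^ (n + q))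
      = (⟨w, IntermediateField.mem_adjoin_simple_self L w⟩ :
            IntermediateField.adjoin L {w})
          * Algebra.trace (IntermediateField.adjoin L {w}) (RatFunc L)
              ((RatFunc.X : RatFunc L) ^ n)
        - (algebraMap L (IntermediateField.adjoin L {w}) π)
          * Algebra.trace (IntermediateField.adjoin L {w}) (RatFunc L)
              ((RatFunc.X : RatFunc L) ^ (n + 1)) := by
  rw [aux_pow_key hq π w hw (n + q) (Nat.le_add_left q n)]
  have h1 : n + q - q = n := by omega
  rw [h1, map_sub, map_smul, map_smul, smul_eq_mul, smul_eq_mul]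


end Setup

lemma aux_ereal_half (a : EReal) (h : a + a = 0) : a = 0 := by
  induction a using EReal.rec with
  | bot => exact absurd h (by simp)
  | coe b =>
    have : ((0:ℝ) : EReal) = (0 : EReal) := by norm_cast
    rw [← this] at h ⊢
    norm_cast at h ⊢
    linarith
  | top => exact absurd h (by simp)

lemma aux_ereal_ge (a b : EReal) (h : a + 1 = b) (hb : 1 ≤ b) : 0 ≤ a := by
  induction a using EReal.rec with
  | bot =>
    rw [← h] at hb
    simp at hb
    rw [← EReal.coe_one] at hb
    exact absurd hb (EReal.coe_ne_bot 1)
  | coe c =>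
    rw [← h] at hb
    have h1 : ((1:ℝ) : EReal) = (1 : EReal) := by norm_cast
    have h0 : ((0:ℝ) : EReal) = (0 : EReal) := by norm_cast
    rw [← h1] at hb
    rw [← h0]
    norm_cast at hb ⊢
    linarith
  | top => exact le_top

section Val

variable {L : Type*} [Field L] (vπ : L → EReal)
  (hv0 : vπ 0 = ⊤) (hv1 : vπ 1 = 0)
  (hvmul : ∀ x y : L, vπ (x * y) = vπ x + vπ y)
  (hvadd : ∀ x y : L, min (vπ x) (vπ y) ≤ vπ (x + y))

include hv1 hvmul in
lemma aux_v_neg (x : L) : vπ (-x) = vπ x := by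
  have h := hvmul (-1) (-1)
  rw [neg_mul_neg, one_mul, hv1] at h
  have h1 : vπ (-1 : L) = 0 := aux_ereal_half _ h.symm
  rw [← neg_one_mul, hvmul, h1, zero_add]

include hv0 hv1 hvadd in
lemma aux_v_nat (n : ℕ) : (0 : EReal) ≤ vπ (n : L) := by
  induction n with
  | zero => rw [Nat.cast_zero, hv0]; exact le_top
  | succ n ih =>
    rw [Nat.cast_succ]
    exact le_trans (le_min ih (by rw [hv1])) (hvadd _ 1)

include hv0 hvadd in
lemma aux_v_sum {ι : Type*} (s : Finset ι) (F : ι → L) (h : ∀ i ∈ s, (0:EReal) ≤ vπ (F i)) :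
    (0 : EReal) ≤ vπ (∑ i ∈ s, F i) := by
  induction s using Finset.cons_induction with
  | empty => rw [Finset.sum_empty, hv0]; exact le_top
  | cons a s ha ih =>
    rw [Finset.sum_cons]
    refine le_trans (le_min (h a (Finset.mem_cons_self a s)) ?_) (hvadd _ _)
    exact ih fun i hi => h i (Finset.mem_cons_of_mem hi)

include hv1 hvmul hvadd in
lemma aux_v_sub (x y : L) (hx : (0:EReal) ≤ vπ x) (hy : (0:EReal) ≤ vπ y) :
    (0 : EReal) ≤ vπ (x - y) := by
  rw [sub_eq_add_neg]
  refine le_trans (le_min hx ?_) (hvadd _ _)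
  rw [aux_v_neg vπ hv1 hvmul]
  exact hy

end Val

/-- Same setting (`w = u^q + π u` in `L(u)`, `Tr` the trace of `L(w) ⊆ L(u)`,
`vπ π = 1`, `vπ q ≥ 1`; the ring of integers `O_L` is `{x | 0 ≤ vπ x}`).  For every polynomial
`f ∈ O_L[u]`, the element `π⁻¹ Tr(f(u))` is a polynomial in `w` with all coefficients in
`O_L`. -/
theorem stmt_6
    (L : Type*) [Field L] [CharZero L]
    (vπ : L → EReal)
    (hv0 : vπ 0 = ⊤) (hv1 : vπ 1 = 0)
    (hvmul : ∀ x y : L, vπ (x * y) = vπ x + vπ y)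
    (hvadd : ∀ x y : L, min (vπ x) (vπ y) ≤ vπ (x + y))
    (q : ℕ) (hq : 2 ≤ q) (π : L) (hπ : vπ π = 1)
    (hvq : (1 : EReal) ≤ vπ ((q : L)))
    (w : RatFunc L) (hw : w = RatFunc.X ^ q + RatFunc.C π * RatFunc.X)
    (f : Polynomial L) (hf : ∀ n : ℕ, (0 : EReal) ≤ vπ (f.coeff n)) :
    ∃ g : Polynomial L, (∀ n : ℕ, (0 : EReal) ≤ vπ (g.coeff n)) ∧
      (RatFunc.C π)⁻¹ *
          ((Algebra.trace (IntermediateField.adjoin L {w}) (RatFunc L)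
              (Polynomial.aeval (RatFunc.X : RatFunc L) f) :
                IntermediateField.adjoin L {w}) : RatFunc L)
        = Polynomial.aeval w g := by
  classical
  have hπ0 : π ≠ 0 := by
    intro h
    rw [h, hv0] at hπ
    have h1 : ((1:ℝ) : EReal) = ⊤ := by rw [EReal.coe_one]; exact hπ.symm
    exact EReal.coe_ne_top 1 h1
  have hCπ0 : RatFunc.C π ≠ 0 := by simpa using hπ0
  set K := IntermediateField.adjoin L {w} with hK
  set T := Algebra.trace K (RatFunc L) with hT
  have hcoe_L : ∀ a : L, ((algebraMap L K a : K) : RatFunc L) = RatFunc.C a := by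
    intro a
    show algebraMap K (RatFunc L) (algebraMap L K a) = RatFunc.C a
    rw [← IsScalarTower.algebraMap_apply L K (RatFunc L), RatFunc.algebraMap_eq_C]
  have hcoe_w : (((⟨w, IntermediateField.mem_adjoin_simple_self L w⟩ : K)) : RatFunc L) = w := rfl
  have hvqπ : (0 : EReal) ≤ vπ ((q : L) / π) := by
    have hmul := hvmul ((q : L) / π) π
    rw [div_mul_cancel₀ _ hπ0, hπ] at hmul
    exact aux_ereal_ge _ _ hmul.symm hvq
  have hGood : ∀ n : ℕ, ∃ g : L[X], (∀ k, (0:EReal) ≤ vπ (g.coeff k)) ∧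
      ((T ((RatFunc.X : RatFunc L) ^ n) : K) : RatFunc L)
        = RatFunc.C π * Polynomial.aeval w g := by
    intro n
    induction n using Nat.strong_induction_on with
    | _ n ih =>
      rcases lt_or_ge n q with hn | hn
      · rcases Nat.eq_zero_or_pos n with h0 | h1
        · subst h0
          refine ⟨C ((q : L) / π), ?_, ?_⟩
          · intro k
            rcases Nat.eq_zero_or_pos k with hk | hk
            · subst hk; rw [coeff_C_zero]; exact hvqπ
            · rw [coeff_C, if_neg (by omega), hv0]; exact le_top
          · rw [hT, aux_tr_zero hq π w hw]
            rw [aeval_C, RatFunc.algebraMap_eq_C, ← map_mul, mul_div_cancel₀ _ hπ0]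
            push_cast
            rw [map_natCast RatFunc.C]
        · rcases lt_or_ge n (q - 1) with h2 | h2
          · refine ⟨0, ?_, ?_⟩
            · intro k; rw [coeff_zero, hv0]; exact le_top
            · rw [hT, aux_tr_mid hq π w hw n h1 h2]
              simp
          · have h3 : n = q - 1 := by omega
            subst h3
            refine ⟨C (-(((q - 1 : ℕ) : L))), ?_, ?_⟩
            · intro k
              rcases Nat.eq_zero_or_pos k with hk | hk
              · subst hk
                rw [coeff_C_zero, aux_v_neg vπ hv1 hvmul]
                exact aux_v_nat vπ hv0 hv1 hvadd _
              · rw [coeff_C, if_neg (by omega), hv0]; exact le_top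
            · rw [hT, aux_tr_top hq π w hw]
              rw [aeval_C, RatFunc.algebraMap_eq_C]
              push_cast
              rw [RatFunc.algebraMap_eq_C]
              rw [nsmul_eq_mul, ← map_natCast (RatFunc.C : L →+* RatFunc L) (q-1)]
              simp only [← map_mul, ← map_neg]
              congr 1
              ring
      · set m := n - q with hm
        have hn' : n = m + q := by omega
        obtain ⟨g₁, hg₁v, hg₁⟩ := ih m (by omega)
        obtain ⟨g₂, hg₂v, hg₂⟩ := ih (m + 1) (by omega)
        refine ⟨X * g₁ - C π * g₂, ?_, ?_⟩
        · intro k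
          rw [coeff_sub, coeff_C_mul]
          cases k with
          | zero =>
            rw [mul_coeff_zero, coeff_X_zero, zero_mul]
            refine aux_v_sub vπ hv1 hvmul hvadd _ _ (by rw [hv0]; exact le_top) ?_
            rw [hvmul, hπ]
            calc (0 : EReal) ≤ 1 + 0 := by norm_num
              _ ≤ 1 + vπ (g₂.coeff 0) := add_le_add le_rfl (hg₂v 0)
          | succ k =>
            rw [coeff_X_mul]
            refine aux_v_sub vπ hv1 hvmul hvadd _ _ (hg₁v k) ?_
            rw [hvmul, hπ]
            calc (0 : EReal) ≤ 1 + 0 := by norm_num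
              _ ≤ 1 + vπ (g₂.coeff (k+1)) := add_le_add le_rfl (hg₂v (k+1))
        · rw [hn', hT, aux_tr_rec hq π w hw m]
          push_cast
          rw [RatFunc.algebraMap_eq_C, ← hT, hg₁, hg₂, map_sub, map_mul, map_mul, aeval_X, aeval_C,
            RatFunc.algebraMap_eq_C]
          ring
  choose G hGv hGeq using hGood
  set g : L[X] := ∑ i ∈ Finset.range (f.natDegree + 1), C (f.coeff i) * G i with hg
  have hgv : ∀ k, (0:EReal) ≤ vπ (g.coeff k) := by
    intro k
    rw [hg, finset_sum_coeff]
    refine aux_v_sum vπ hv0 hvadd _ _ fun i _ => ?_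
    rw [coeff_C_mul, hvmul]
    exact add_nonneg (hf i) (hGv i k)
  have hgeq : ((T (Polynomial.aeval (RatFunc.X : RatFunc L) f) : K) : RatFunc L)
      = RatFunc.C π * Polynomial.aeval w g := by
    rw [Polynomial.aeval_eq_sum_range, map_sum]
    push_cast
    have hterm : ∀ i ∈ Finset.range (f.natDegree + 1),
        ((T (f.coeff i • (RatFunc.X : RatFunc L) ^ i) : K) : RatFunc L)
          = RatFunc.C π * (RatFunc.C (f.coeff i) * Polynomial.aeval w (G i)) := by
      intro i _
      rw [← algebraMap_smul K (f.coeff i) ((RatFunc.X : RatFunc L) ^ i), map_smul, smul_eq_mul]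
      push_cast
      rw [RatFunc.algebraMap_eq_C, hGeq i]
      ring
    rw [Finset.sum_congr rfl hterm, ← Finset.mul_sum]
    congr 1
    rw [hg, map_sum]
    exact (Finset.sum_congr rfl fun i _ => by rw [map_mul, aeval_C, RatFunc.algebraMap_eq_C]).symm
  refine ⟨g, hgv, ?_⟩
  rw [hgeq, inv_mul_cancel_left₀ hCπ0]
end

section
/- Let α ∈ L^× be an element that is not of the form π^{−i} for any natural number i. Then the map f ↦ α·φ_q(f) − f is a bijection from R^+_L to itself. -/
/-- Formal composition `f ∘ s` of power series (intended for `s` with zero constant term). -/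
noncomputable def pscomp {L : Type*} [CommRing L] (f s : PowerSeries L) : PowerSeries L :=
  PowerSeries.mk fun n =>
    ∑ m ∈ Finset.range (n + 1), PowerSeries.coeff m f * PowerSeries.coeff n (s ^ m)

/-- The substitution operator `φ_q : f(u) ↦ f(u^q + π u)`. -/
noncomputable def phiqPS {L : Type*} [CommRing L] (q : ℕ) (π : L) (f : PowerSeries L) :
    PowerSeries L :=
  pscomp f (PowerSeries.X ^ q + PowerSeries.C π * PowerSeries.X)

/-- Membership in the ring `R^+_L` of power series convergent on the open unit disc. -/
def RplusMem {L : Type*} [Field L] (v : L → EReal) (f : PowerSeries L) : Prop :=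
  ∀ t : ℝ, 0 < t → ∀ M : ℝ, ∃ N : ℕ, ∀ n ≥ N,
    (M : EReal) ≤ v (PowerSeries.coeff n f) + (((n : ℝ) * t : ℝ) : EReal)

/-! ### Auxiliary material -/

section ERealHelpers

lemma ereal_add_zero_real (a b : EReal) (h : a + b = 0) : ∃ r : ℝ, a = (r : EReal) := by
  induction a with
  | bot => rw [EReal.bot_add] at h; exact absurd h (by simp)
  | coe r => exact ⟨r, rfl⟩
  | top =>
    induction b with
    | bot => rw [EReal.add_bot] at h; exact absurd h (by simp)
    | coe r => rw [EReal.top_add_coe] at h; exact absurd h (by simp)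
    | top => rw [EReal.top_add_top] at h; exact absurd h (by simp)

lemma ereal_sub_le (X : EReal) (a b : ℝ) (h : (a : EReal) ≤ X + (b : EReal)) :
    ((a - b : ℝ) : EReal) ≤ X := by
  induction X with
  | bot => rw [EReal.bot_add] at h; exact absurd h (by simp)
  | coe r =>
    rw [← EReal.coe_add] at h
    norm_cast at h ⊢
    linarith
  | top => exact le_top

lemma ereal_le_add (X : EReal) (a b c : ℝ) (h : (a : EReal) ≤ X) (h2 : c ≤ a + b) :
    (c : EReal) ≤ X + (b : EReal) := by
  calc (c : EReal) ≤ ((a + b : ℝ) : EReal) := by exact_mod_cast h2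
    _ = (a : EReal) + (b : EReal) := EReal.coe_add a b
    _ ≤ X + (b : EReal) := add_le_add h le_rfl

lemma ereal_le_add' (X : EReal) (a b c : ℝ) (h : (a : EReal) ≤ X) (h2 : c ≤ a + b) :
    (c : EReal) ≤ (b : EReal) + X := by
  rw [add_comm]; exact ereal_le_add X a b c h h2

lemma ereal_add_coe_ne_bot (a : EReal) (r : ℝ) (ha : a ≠ ⊥) : a + (r : EReal) ≠ ⊥ := by
  induction a with
  | bot => exact absurd rfl ha
  | coe x => rw [← EReal.coe_add]; exact EReal.coe_ne_bot _
  | top => rw [EReal.top_add_coe]; simp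

lemma exists_lb_fin (w : ℕ → EReal) (N : ℕ) (hw : ∀ n, n < N → w n ≠ ⊥) :
    ∃ B : ℝ, ∀ n, n < N → (B : EReal) ≤ w n := by
  induction N with
  | zero => exact ⟨0, fun n hn => absurd hn (Nat.not_lt_zero n)⟩
  | succ N ih =>
    obtain ⟨B, hB⟩ := ih (fun n hn => hw n (hn.trans (Nat.lt_succ_self N)))
    obtain ⟨r, hr⟩ : ∃ r : ℝ, (r : EReal) ≤ w N := by
      have hN := hw N (Nat.lt_succ_self N)
      generalize hwn : w N = a at hN ⊢
      induction a with
      | bot => exact absurd rfl hN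
      | coe x => exact ⟨x, le_rfl⟩
      | top => exact ⟨0, le_top⟩
    refine ⟨min B r, fun n hn => ?_⟩
    rcases Nat.lt_succ_iff_lt_or_eq.mp hn with h1 | h1
    · exact le_trans (by exact_mod_cast min_le_left B r) (hB n h1)
    · subst h1; exact le_trans (by exact_mod_cast min_le_right B r) hr

lemma exists_lb_all (w : ℕ → EReal) (hbot : ∀ n, w n ≠ ⊥) (N : ℕ)
    (h : ∀ n, N ≤ n → (0 : EReal) ≤ w n) :
    ∃ B : ℝ, B ≤ 0 ∧ ∀ n, (B : EReal) ≤ w n := by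
  obtain ⟨B₀, hB₀⟩ := exists_lb_fin w N (fun n _ => hbot n)
  refine ⟨min B₀ 0, min_le_right _ _, fun n => ?_⟩
  rcases lt_or_ge n N with h1 | h1
  · exact le_trans (by exact_mod_cast min_le_left B₀ 0) (hB₀ n h1)
  · refine le_trans ?_ (h n h1)
    rw [← EReal.coe_zero]
    exact_mod_cast min_le_right B₀ 0

lemma log_lin (A s M' : ℝ) (hA : 0 ≤ A) (hs : 0 < s) :
    ∃ N : ℕ, ∀ n : ℕ, N ≤ n → M' + A * Real.log ((n : ℝ) + 2) ≤ s * n := by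
  refine ⟨max (Nat.ceil ((4 * A / s) ^ 2)) (Nat.ceil (2 * (M' + s) / s)), fun n hn => ?_⟩
  have h1 : ((4 * A / s) ^ 2 : ℝ) ≤ n :=
    le_trans (Nat.le_ceil _) (by exact_mod_cast le_trans (le_max_left _ _) hn)
  have h2 : (2 * (M' + s) / s : ℝ) ≤ n :=
    le_trans (Nat.le_ceil _) (by exact_mod_cast le_trans (le_max_right _ _) hn)
  have hx : (0 : ℝ) < (n : ℝ) + 2 := by positivity
  have hlog : Real.log ((n : ℝ) + 2) ≤ 2 * Real.sqrt ((n : ℝ) + 2) := by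
    have hsq : Real.log ((n : ℝ) + 2) = 2 * Real.log (Real.sqrt ((n : ℝ) + 2)) := by
      rw [Real.log_sqrt (by positivity)]; ring
    have hpos : (0 : ℝ) < Real.sqrt ((n : ℝ) + 2) := Real.sqrt_pos.mpr hx
    have := Real.log_le_sub_one_of_pos hpos
    rw [hsq]; linarith
  have hsb : 4 * A / s ≤ Real.sqrt ((n : ℝ) + 2) := by
    have hr : Real.sqrt ((4 * A / s) ^ 2) ≤ Real.sqrt ((n : ℝ) + 2) :=
      Real.sqrt_le_sqrt (by linarith)
    rwa [Real.sqrt_sq (by positivity)] at hr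
  have hsA : 4 * A ≤ s * Real.sqrt ((n : ℝ) + 2) := by
    rw [div_le_iff₀ hs] at hsb
    linarith [hsb]
  have hss : Real.sqrt ((n : ℝ) + 2) * Real.sqrt ((n : ℝ) + 2) = (n : ℝ) + 2 :=
    Real.mul_self_sqrt (by positivity)
  have h3 : 2 * A * Real.sqrt ((n : ℝ) + 2) ≤ (s / 2) * ((n : ℝ) + 2) := by
    nlinarith [mul_nonneg (sub_nonneg.mpr hsA) (Real.sqrt_nonneg ((n : ℝ) + 2))]
  have h4 : A * Real.log ((n : ℝ) + 2) ≤ 2 * A * Real.sqrt ((n : ℝ) + 2) := by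
    nlinarith [mul_le_mul_of_nonneg_left hlog hA]
  -- M' + (s/2)(n+2) ≤ s n  iff  M' + s ≤ (s/2) n  iff  n ≥ 2(M'+s)/s
  have h5 : 2 * (M' + s) ≤ s * n := by
    rw [div_le_iff₀ hs] at h2
    linarith [h2]
  nlinarith [h3, h4, h5]

end ERealHelpers

section ValuationLemmas

variable {L : Type*} [Field L] (v : L → EReal)
  (hv0 : v 0 = ⊤) (hv1 : v 1 = 0)
  (hvmul : ∀ x y : L, v (x * y) = v x + v y)
  (hvadd : ∀ x y : L, min (v x) (v y) ≤ v (x + y))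

include hv1 hvmul in
lemma vreal (x : L) (hx : x ≠ 0) : ∃ r : ℝ, v x = (r : EReal) := by
  have h := hvmul x x⁻¹
  rw [mul_inv_cancel₀ hx, hv1] at h
  exact ereal_add_zero_real _ _ h.symm

include hv0 hv1 hvmul in
lemma vne_bot (x : L) : v x ≠ ⊥ := by
  by_cases hx : x = 0
  · rw [hx, hv0]; simp
  · obtain ⟨r, hr⟩ := vreal v hv1 hvmul x hx
    rw [hr]; simp

include hv1 hvmul in
lemma vneg (x : L) : v (-x) = v x := by
  have h1 : v (-1 : L) = 0 := by
    have h := hvmul (-1 : L) (-1)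
    rw [neg_mul_neg, one_mul, hv1] at h
    obtain ⟨r, hr⟩ := vreal v hv1 hvmul (-1 : L) (by norm_num)
    rw [hr] at h ⊢
    rw [← EReal.coe_add] at h
    norm_cast
    have : r + r = 0 := by exact_mod_cast h.symm
    linarith
  have h2 := hvmul (-1 : L) x
  rw [h1, zero_add] at h2
  rw [← h2, neg_one_mul]

include hv1 hvmul hvadd in
lemma vsub (x y : L) : min (v x) (v y) ≤ v (x - y) := by
  have h := hvadd x (-y)
  rw [vneg v hv1 hvmul] at h
  rwa [sub_eq_add_neg]

include hv1 hvmul hvadd in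
lemma vlt (x y : L) (h : v y < v x) : v (x + y) = v y := by
  refine le_antisymm ?_ ((min_eq_right h.le ▸ hvadd x y))
  by_contra hc
  push_neg at hc
  have h3 : min (v (x + y)) (v (-x)) ≤ v (x + y + -x) := hvadd _ _
  rw [vneg v hv1 hvmul] at h3
  have heq : x + y + -x = y := by ring
  rw [heq] at h3
  exact absurd h3 (not_le.mpr (lt_min hc h))

include hv0 hv1 hvadd in
lemma vnat (k : ℕ) : (0 : EReal) ≤ v (k : L) := by
  induction k with
  | zero => simp [hv0]
  | succ n ih =>
    push_cast
    refine le_trans ?_ (hvadd (n : L) 1)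
    rw [hv1]
    exact le_min ih le_rfl

include hv0 hvadd in
lemma vsum {ι : Type*} (s : Finset ι) (f : ι → L) (w : EReal)
    (h : ∀ i ∈ s, w ≤ v (f i)) : w ≤ v (∑ i ∈ s, f i) := by
  classical
  induction s using Finset.cons_induction with
  | empty => simp [hv0]
  | cons a s ha ih =>
    rw [Finset.sum_cons]
    refine le_trans (le_min (h a (Finset.mem_cons_self a s))
      (ih fun i hi => h i (Finset.mem_cons_of_mem hi))) (hvadd _ _)

include hv1 hvmul in
lemma vpow (x : L) (k : ℕ) (r : ℝ) (hx : v x = (r : EReal)) :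
    v (x ^ k) = ((k * r : ℝ) : EReal) := by
  induction k with
  | zero => simpa using hv1
  | succ n ih =>
    rw [pow_succ, hvmul, ih, hx, ← EReal.coe_add]
    norm_cast
    push_cast
    ring

include hv1 hvmul in
lemma vinv (x : L) (hx0 : x ≠ 0) (r : ℝ) (hx : v x = (r : EReal)) :
    v x⁻¹ = ((-r : ℝ) : EReal) := by
  have h := hvmul x x⁻¹
  rw [mul_inv_cancel₀ hx0, hv1, hx] at h
  obtain ⟨s, hs⟩ := vreal v hv1 hvmul x⁻¹ (inv_ne_zero hx0)
  rw [hs] at h ⊢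
  norm_cast
  rw [← EReal.coe_add] at h
  have : r + s = 0 := by exact_mod_cast h.symm
  linarith

end ValuationLemmas

section PowerSeriesLemmas

/-- The coefficient of `u^n` in `(u^q + π u)^m`. -/
noncomputable def cmn {L : Type*} [CommRing L] (q : ℕ) (π : L) (m n : ℕ) : L :=
  PowerSeries.coeff n ((PowerSeries.X ^ q + PowerSeries.C π * PowerSeries.X) ^ m)

lemma coeff_phiq {L : Type*} [CommRing L] (q : ℕ) (π : L) (f : PowerSeries L) (n : ℕ) :
    PowerSeries.coeff n (phiqPS q π f) =
      ∑ m ∈ Finset.range (n + 1), PowerSeries.coeff m f * cmn q π m n := by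
  simp [phiqPS, pscomp, cmn]

lemma cmn_eq {L : Type*} [CommRing L] (q : ℕ) (π : L) (m n : ℕ) :
    cmn q π m n = ∑ k ∈ Finset.range (m + 1),
      if q * k + (m - k) = n then π ^ (m - k) * (m.choose k : L) else 0 := by
  rw [cmn, add_pow, map_sum]
  congr 1
  ext k
  have h1 : (PowerSeries.X ^ q : PowerSeries L) ^ k * (PowerSeries.C π * PowerSeries.X) ^ (m - k)
        * (m.choose k : PowerSeries L)
      = PowerSeries.C (π ^ (m - k) * (m.choose k : L)) * PowerSeries.X ^ (q * k + (m - k)) := by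
    rw [mul_pow, ← pow_mul, ← map_pow, ← map_natCast (PowerSeries.C : L →+* PowerSeries L) (m.choose k), map_mul,
      pow_add]
    ring
  rw [h1, PowerSeries.coeff_C_mul, PowerSeries.coeff_X_pow]
  by_cases h : q * k + (m - k) = n
  · simp [h]
  · simp only [h, if_false]
    rw [if_neg (fun hc => h hc.symm), mul_zero]

lemma cmn_diag {L : Type*} [CommRing L] (q : ℕ) (hq : 2 ≤ q) (π : L) (n : ℕ) :
    cmn q π n n = π ^ n := by
  rw [cmn_eq]
  have h : ∀ k ∈ Finset.range (n + 1),
      (if q * k + (n - k) = n then π ^ (n - k) * (n.choose k : L) else 0)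
      = if k = 0 then π ^ n else 0 := by
    intro k hk
    rw [Finset.mem_range] at hk
    by_cases h0 : k = 0
    · subst h0; simp
    · have hknot : ¬(q * k + (n - k) = n) := by
        intro hc
        have hkn : k ≤ n := Nat.lt_succ_iff.mp hk
        have h2 : 2 * k ≤ q * k := Nat.mul_le_mul_right k hq
        omega
      simp [hknot, h0]
  rw [Finset.sum_congr rfl h, Finset.sum_ite_eq' (Finset.range (n + 1)) 0 (fun _ => π ^ n)]
  simp

variable {L : Type*} [Field L] (v : L → EReal)
  (hv0 : v 0 = ⊤) (hv1 : v 1 = 0)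
  (hvmul : ∀ x y : L, v (x * y) = v x + v y)
  (hvadd : ∀ x y : L, min (v x) (v y) ≤ v (x + y))

include hv0 hv1 hvmul hvadd in
lemma cmn_low (q e : ℕ) (hq : 2 ≤ q) (he : 0 < e) (π : L)
    (hπ : v π = ((1 / (e : ℝ) : ℝ) : EReal)) (m n : ℕ) :
    ((max 0 ((2 * (m : ℝ) - n) / e) : ℝ) : EReal) ≤ v (cmn q π m n) := by
  rw [cmn_eq]
  apply vsum v hv0 hvadd
  intro k hk
  rw [Finset.mem_range, Nat.lt_succ_iff] at hk
  by_cases h : q * k + (m - k) = n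
  · rw [if_pos h, hvmul, vpow v hv1 hvmul π (m - k) _ hπ]
    have hge : ((0 : ℝ) : EReal) ≤ v ((m.choose k : L)) := by
      rw [EReal.coe_zero]; exact vnat v hv0 hv1 hvadd _
    have hmk : m + k ≤ n := by
      have h2 : 2 * k ≤ q * k := Nat.mul_le_mul_right k hq
      omega
    have hreal : max 0 ((2 * (m : ℝ) - n) / e) ≤ ((m - k : ℕ) : ℝ) * (1 / e) := by
      have hc : ((m - k : ℕ) : ℝ) = (m : ℝ) - k := by
        push_cast [hk]; ring
      rw [hc]
      have he' : (0 : ℝ) < e := by exact_mod_cast he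
      have hkm : (k : ℝ) ≤ m := by exact_mod_cast hk
      have hmn : (m : ℝ) + k ≤ n := by exact_mod_cast hmk
      have h1e : (0 : ℝ) < 1 / (e : ℝ) := by positivity
      apply max_le
      · exact mul_nonneg (by linarith) h1e.le
      · rw [div_eq_mul_one_div]
        exact mul_le_mul_of_nonneg_right (by linarith) h1e.le
    calc ((max 0 ((2 * (m : ℝ) - n) / e) : ℝ) : EReal)
        ≤ ((((m - k : ℕ) : ℝ) * (1 / e) : ℝ) : EReal) := by exact_mod_cast hreal
      _ = ((((m - k : ℕ) : ℝ) * (1 / e) : ℝ) : EReal) + ((0 : ℝ) : EReal) := by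
          rw [EReal.coe_zero, add_zero]
      _ ≤ _ := add_le_add le_rfl hge
  · rw [if_neg h, hv0]; exact le_top

include hv0 hv1 hvmul hvadd in
lemma cmn_nonneg (q e : ℕ) (hq : 2 ≤ q) (he : 0 < e) (π : L)
    (hπ : v π = ((1 / (e : ℝ) : ℝ) : EReal)) (m n : ℕ) :
    ((0 : ℝ) : EReal) ≤ v (cmn q π m n) := by
  refine le_trans ?_ (cmn_low v hv0 hv1 hvmul hvadd q e hq he π hπ m n)
  exact_mod_cast le_max_left 0 ((2 * (m : ℝ) - n) / e)

lemma coeff_T {L : Type*} [Field L] (q : ℕ) (hq : 2 ≤ q) (π α : L) (f : PowerSeries L) (n : ℕ) :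
    PowerSeries.coeff n (PowerSeries.C α * phiqPS q π f - f)
      = (α * π ^ n - 1) * PowerSeries.coeff n f
        + α * ∑ m ∈ Finset.range n, PowerSeries.coeff m f * cmn q π m n := by
  rw [map_sub, PowerSeries.coeff_C_mul, coeff_phiq, Finset.sum_range_succ, cmn_diag q hq]
  ring

end PowerSeriesLemmas

/-- Coefficients of the preimage of `g` under `f ↦ α φ_q(f) - f`. -/
noncomputable def solCoeff {L : Type*} [Field L] (q : ℕ) (π α : L) (g : PowerSeries L)
    (n : ℕ) : L :=
  (α * π ^ n - 1)⁻¹ *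
    (PowerSeries.coeff n g - α * ∑ m ∈ (Finset.range n).attach,
      solCoeff q π α g m.1 * cmn q π m.1 n)
decreasing_by exact Finset.mem_range.mp m.2

lemma solCoeff_eq {L : Type*} [Field L] (q : ℕ) (π α : L) (g : PowerSeries L) (n : ℕ) :
    solCoeff q π α g n = (α * π ^ n - 1)⁻¹ *
      (PowerSeries.coeff n g - α * ∑ m ∈ Finset.range n,
        solCoeff q π α g m * cmn q π m n) := by
  rw [solCoeff, ← Finset.sum_attach (Finset.range n) (fun m => solCoeff q π α g m * cmn q π m n)]


lemma mapsTo_est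
    {L : Type*} [Field L]
    (v : L → EReal)
    (hv0 : v 0 = ⊤) (hv1 : v 1 = 0)
    (hvmul : ∀ x y : L, v (x * y) = v x + v y)
    (hvadd : ∀ x y : L, min (v x) (v y) ≤ v (x + y))
    (π : L) (q e : ℕ) (hq : 2 ≤ q) (he : 0 < e)
    (hπ : v π = ((1 / (e : ℝ) : ℝ) : EReal))
    (α : L) (hα0 : α ≠ 0)
    (f : PowerSeries L) (hf : RplusMem v f) :
    RplusMem v (PowerSeries.C α * phiqPS q π f - f) := by
  obtain ⟨rα, hrα⟩ := vreal v hv1 hvmul α hα0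
  intro t ht M
  set M' := max M (M - rα) with hM'
  obtain ⟨N₀, hN₀⟩ := hf t ht M'
  obtain ⟨β, hβ⟩ := exists_lb_fin (fun m => v (PowerSeries.coeff m f)) N₀
    (fun m _ => vne_bot v hv0 hv1 hvmul _)
  refine ⟨max N₀ (Nat.ceil ((M - rα - β) / t)), fun n hn => ?_⟩
  have hnN₀ : N₀ ≤ n := le_trans (le_max_left _ _) hn
  have hnt : M - rα - β ≤ (n : ℝ) * t := by
    have h1 : ((M - rα - β) / t : ℝ) ≤ n :=
      le_trans (Nat.le_ceil _) (by exact_mod_cast le_trans (le_max_right _ _) hn)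
    rw [div_le_iff₀ ht] at h1
    linarith
  have hXY : PowerSeries.coeff n (PowerSeries.C α * phiqPS q π f - f)
      = α * (∑ m ∈ Finset.range (n + 1), PowerSeries.coeff m f * cmn q π m n)
        - PowerSeries.coeff n f := by
    rw [map_sub, PowerSeries.coeff_C_mul, coeff_phiq]
  rw [hXY]
  -- bound for the sum part
  have hSum : ((M - rα - (n : ℝ) * t : ℝ) : EReal)
      ≤ v (∑ m ∈ Finset.range (n + 1), PowerSeries.coeff m f * cmn q π m n) := by
    apply vsum v hv0 hvadd
    intro m hm
    rw [Finset.mem_range, Nat.lt_succ_iff] at hm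
    rw [hvmul]
    have hcm : ((0 : ℝ) : EReal) ≤ v (cmn q π m n) :=
      cmn_nonneg v hv0 hv1 hvmul hvadd q e hq he π hπ m n
    have hfm : ((M - rα - (n : ℝ) * t : ℝ) : EReal) ≤ v (PowerSeries.coeff m f) := by
      rcases lt_or_ge m N₀ with h1 | h1
      · refine le_trans ?_ (hβ m h1)
        exact EReal.coe_le_coe_iff.mpr (by linarith)
      · have h2 := hN₀ m h1
        have h3 := ereal_sub_le _ M' ((m : ℝ) * t) h2
        refine le_trans ?_ h3
        have hmt : (m : ℝ) * t ≤ (n : ℝ) * t := by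
          have : (m : ℝ) ≤ n := by exact_mod_cast hm
          nlinarith
        refine EReal.coe_le_coe_iff.mpr ?_
        have : M - rα ≤ M' := le_max_right _ _
        linarith
    calc ((M - rα - (n : ℝ) * t : ℝ) : EReal)
        = ((M - rα - (n : ℝ) * t : ℝ) : EReal) + ((0 : ℝ) : EReal) := by
          rw [EReal.coe_zero, add_zero]
      _ ≤ _ := add_le_add hfm hcm
  have haS : ((M - (n : ℝ) * t : ℝ) : EReal)
      ≤ v (α * ∑ m ∈ Finset.range (n + 1), PowerSeries.coeff m f * cmn q π m n) := by
    rw [hvmul, hrα]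
    exact ereal_le_add' _ (M - rα - (n : ℝ) * t) rα (M - (n : ℝ) * t) hSum (by linarith)
  have hfn : ((M - (n : ℝ) * t : ℝ) : EReal) ≤ v (PowerSeries.coeff n f) := by
    have h2 := hN₀ n hnN₀
    have h3 := ereal_sub_le _ M' ((n : ℝ) * t) h2
    refine le_trans ?_ h3
    exact EReal.coe_le_coe_iff.mpr (by have : M ≤ M' := le_max_left _ _; linarith)
  have hmin := vsub v hv1 hvmul hvadd
    (α * ∑ m ∈ Finset.range (n + 1), PowerSeries.coeff m f * cmn q π m n)
    (PowerSeries.coeff n f)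
  have h4 : ((M - (n : ℝ) * t : ℝ) : EReal)
      ≤ v (α * (∑ m ∈ Finset.range (n + 1), PowerSeries.coeff m f * cmn q π m n)
          - PowerSeries.coeff n f) :=
    le_trans (le_min haS hfn) hmin
  exact ereal_le_add _ (M - (n : ℝ) * t) ((n : ℝ) * t) M h4 (by linarith)


set_option maxHeartbeats 2000000 in
lemma sol_mem
    {L : Type*} [Field L]
    (v : L → EReal)
    (hv0 : v 0 = ⊤) (hv1 : v 1 = 0)
    (hvmul : ∀ x y : L, v (x * y) = v x + v y)
    (hvadd : ∀ x y : L, min (v x) (v y) ≤ v (x + y))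
    (π : L) (q e : ℕ) (hq : 2 ≤ q) (he : 0 < e)
    (hπ : v π = ((1 / (e : ℝ) : ℝ) : EReal))
    (α : L) (hα0 : α ≠ 0) (hα : ∀ i : ℕ, α * π ^ i ≠ 1)
    (g : PowerSeries L) (hg : RplusMem v g) :
    RplusMem v (PowerSeries.mk (solCoeff q π α g)) := by
  obtain ⟨rα, hrα⟩ := vreal v hv1 hvmul α hα0
  have he' : (0 : ℝ) < e := by exact_mod_cast he
  have hne : ∀ n : ℕ, α * π ^ n - 1 ≠ 0 := fun n => sub_ne_zero.mpr (hα n)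
  -- uniform lower bound on v((α π^n - 1)⁻¹)
  obtain ⟨C, hC0, hC⟩ : ∃ C : ℝ, C ≤ 0 ∧ ∀ n : ℕ, (C : EReal) ≤ v ((α * π ^ n - 1)⁻¹) := by
    apply exists_lb_all _ (fun n => vne_bot v hv0 hv1 hvmul _) (Nat.ceil ((-rα) * e) + 1)
    intro n hn
    have hval : v (α * π ^ n) = ((rα + n * (1 / e) : ℝ) : EReal) := by
      rw [hvmul, hrα, vpow v hv1 hvmul π n _ hπ, ← EReal.coe_add]
    have hp : (0 : ℝ) < rα + n * (1 / e) := by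
      have h1 : ((-rα) * e : ℝ) ≤ Nat.ceil ((-rα) * e) := Nat.le_ceil _
      have h2 : (Nat.ceil ((-rα) * e) + 1 : ℝ) ≤ n := by exact_mod_cast hn
      have h3 : (-rα) * e < n := by linarith
      have h4 : -rα < (n : ℝ) * (1 / e) := by
        rw [mul_one_div, lt_div_iff₀ he']
        linarith
      linarith
    have hneg1 : v (-1 : L) = ((0 : ℝ) : EReal) := by
      rw [vneg v hv1 hvmul, hv1, EReal.coe_zero]
    have hlt : v (-1 : L) < v (α * π ^ n) := by
      rw [hneg1, hval]
      exact_mod_cast hp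
    have hveq : v (α * π ^ n - 1) = ((0 : ℝ) : EReal) := by
      rw [sub_eq_add_neg, vlt v hv1 hvmul hvadd _ _ hlt, hneg1]
    rw [vinv v hv1 hvmul _ (hne n) 0 hveq]
    norm_num
  intro t ht M
  obtain ⟨s, hs0, hst⟩ : ∃ s : ℝ, 0 < s ∧ s + s = t := ⟨t / 2, by positivity, by ring⟩
  -- lower bound for the coefficients of g
  obtain ⟨B, hB0, hB⟩ : ∃ B : ℝ, B ≤ 0 ∧ ∀ k : ℕ,
      (B : EReal) ≤ v (PowerSeries.coeff k g) + (((k : ℝ) * s : ℝ) : EReal) := by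
    obtain ⟨N₀, hN₀⟩ := hg s hs0 0
    apply exists_lb_all _
      (fun k => ereal_add_coe_ne_bot _ _ (vne_bot v hv0 hv1 hvmul _)) N₀
    intro n hn
    rw [← EReal.coe_zero]
    exact hN₀ n hn
  obtain ⟨l, hl1, hlC⟩ : ∃ l : ℝ, l ≤ -1 ∧ l ≤ C + rα :=
    ⟨min (-1) (C + rα), min_le_left _ _, min_le_right _ _⟩
  have hl0 : l ≤ 0 := by linarith
  obtain ⟨K, hK, hKdef⟩ : ∃ K : ℝ, 0 < K ∧ K = (-l) * e :=
    ⟨(-l) * e, mul_pos (by linarith) he', rfl⟩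
  obtain ⟨D, hD, hDdef⟩ : ∃ D : ℝ, 0 < D ∧ D * Real.log ((4 : ℝ) / 3) = 1 := by
    have hlog43 : (0 : ℝ) < Real.log ((4 : ℝ) / 3) := Real.log_pos (by norm_num)
    exact ⟨(Real.log ((4 : ℝ) / 3))⁻¹, inv_pos.mpr hlog43, inv_mul_cancel₀ (ne_of_gt hlog43)⟩
  obtain ⟨N₂, hN₂⟩ : ∃ N₂ : ℕ, 2 * K + 2 ≤ (N₂ : ℝ) := by
    refine ⟨Nat.ceil (2 * K) + 2, ?_⟩
    have h1 : (2 * K : ℝ) ≤ Nat.ceil (2 * K) := Nat.le_ceil _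
    push_cast
    linarith
  obtain ⟨β, hβ⟩ := exists_lb_fin
    (fun n => v (solCoeff q π α g n) + (((n : ℝ) * s : ℝ) : EReal)) N₂
    (fun n _ => ereal_add_coe_ne_bot _ _ (vne_bot v hv0 hv1 hvmul _))
  obtain ⟨B', hB'1, hB'2⟩ : ∃ B' : ℝ, B' ≤ B + C ∧ B' ≤ β :=
    ⟨min (B + C) β, min_le_left _ _, min_le_right _ _⟩
  obtain ⟨φ, hφeq⟩ : ∃ φ : ℕ → ℝ, ∀ n : ℕ,
      φ n = B' + l * (2 + D * Real.log ((n : ℝ) + 2)) :=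
    ⟨fun n => B' + l * (2 + D * Real.log ((n : ℝ) + 2)), fun n => rfl⟩
  have hlogn : ∀ n : ℕ, (0 : ℝ) ≤ Real.log ((n : ℝ) + 2) := by
    intro n
    have hn0 : (0 : ℝ) ≤ (n : ℝ) := Nat.cast_nonneg n
    exact Real.log_nonneg (by linarith)
  have hφ_le : ∀ n : ℕ, φ n ≤ B' := by
    intro n
    have h1 : l * (2 + D * Real.log ((n : ℝ) + 2)) ≤ 0 :=
      mul_nonpos_of_nonpos_of_nonneg hl0 (by nlinarith [hlogn n, hD.le])
    rw [hφeq]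
    linarith
  have hφmono : ∀ m n : ℕ, m ≤ n → φ n ≤ φ m := by
    intro m n hmn
    have hlog : Real.log ((m : ℝ) + 2) ≤ Real.log ((n : ℝ) + 2) := by
      apply Real.log_le_log (by positivity)
      have : (m : ℝ) ≤ n := by exact_mod_cast hmn
      linarith
    have h1 : l * (2 + D * Real.log ((n : ℝ) + 2)) ≤ l * (2 + D * Real.log ((m : ℝ) + 2)) := by
      apply mul_le_mul_of_nonpos_left _ hl0
      nlinarith [hD.le]
    rw [hφeq, hφeq]
    linarith
  -- main claim by strong induction
  have claim : ∀ n : ℕ, ((φ n - (n : ℝ) * s : ℝ) : EReal) ≤ v (solCoeff q π α g n) := by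
    intro n
    induction n using Nat.strong_induction_on with
    | _ n ih =>
      by_cases hn2 : n < N₂
      · have h1 := hβ n hn2
        have h2 := ereal_sub_le _ β ((n : ℝ) * s) h1
        refine le_trans ?_ h2
        refine EReal.coe_le_coe_iff.mpr ?_
        have h3 : φ n ≤ β := le_trans (hφ_le n) hB'2
        linarith
      · push_neg at hn2
        have hn2' : 2 * K + 2 ≤ (n : ℝ) :=
          le_trans hN₂ (by exact_mod_cast hn2)
        rw [solCoeff_eq, hvmul]
        -- bound the sum
        have hSn : ((φ n - C - rα - (n : ℝ) * s : ℝ) : EReal)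
            ≤ v (∑ m ∈ Finset.range n, solCoeff q π α g m * cmn q π m n) := by
          apply vsum v hv0 hvadd
          intro m hm
          rw [Finset.mem_range] at hm
          rw [hvmul]
          have hIH := ih m hm
          have hc := cmn_low v hv0 hv1 hvmul hvadd q e hq he π hπ m n
          have hm' : (m : ℝ) ≤ n := by exact_mod_cast hm.le
          have hreal : φ n - C - rα - (n : ℝ) * s
              ≤ (φ m - (m : ℝ) * s) + max 0 ((2 * (m : ℝ) - n) / e) := by
            have hCrα : -C - rα ≤ -l := by linarith
            have hms : -((n : ℝ) * s) ≤ -((m : ℝ) * s) := by nlinarith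
            rcases le_or_gt K (2 * (m : ℝ) - n) with hcA | hcB
            · -- big power of π
              have h1 : -l ≤ (2 * (m : ℝ) - n) / e := by
                rw [le_div_iff₀ he']
                nlinarith [hcA, hKdef]
              have h2 : -l ≤ max 0 ((2 * (m : ℝ) - n) / e) :=
                le_trans h1 (le_max_right _ _)
              have h3 : φ n ≤ φ m := hφmono m n hm.le
              linarith
            · -- index drops by a factor
              have h4m : 4 * (m : ℝ) + 8 ≤ 3 * (n : ℝ) + 6 := by linarith
              have hlogr : Real.log ((4 : ℝ) / 3)
                  ≤ Real.log (((n : ℝ) + 2) / ((m : ℝ) + 2)) := by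
                apply Real.log_le_log (by norm_num)
                rw [le_div_iff₀ (by positivity)]
                linarith
              have hld : Real.log (((n : ℝ) + 2) / ((m : ℝ) + 2))
                  = Real.log ((n : ℝ) + 2) - Real.log ((m : ℝ) + 2) :=
                Real.log_div (by positivity) (by positivity)
              have hkey : 1 ≤ D * (Real.log ((n : ℝ) + 2) - Real.log ((m : ℝ) + 2)) := by
                rw [← hld]
                calc (1 : ℝ) = D * Real.log ((4 : ℝ) / 3) := hDdef.symm
                  _ ≤ D * Real.log (((n : ℝ) + 2) / ((m : ℝ) + 2)) :=
                      mul_le_mul_of_nonneg_left hlogr hD.le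
              have hlX : l * (D * (Real.log ((n : ℝ) + 2) - Real.log ((m : ℝ) + 2)))
                  ≤ l * 1 := mul_le_mul_of_nonpos_left hkey hl0
              have hφl : φ n - l ≤ φ m := by
                rw [hφeq, hφeq]
                nlinarith [hlX]
              have h0max : (0 : ℝ) ≤ max 0 ((2 * (m : ℝ) - n) / e) := le_max_left _ _
              linarith
          calc ((φ n - C - rα - (n : ℝ) * s : ℝ) : EReal)
              ≤ (((φ m - (m : ℝ) * s) + max 0 ((2 * (m : ℝ) - n) / e) : ℝ) : EReal) := by
                exact_mod_cast hreal
            _ = ((φ m - (m : ℝ) * s : ℝ) : EReal)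
                + ((max 0 ((2 * (m : ℝ) - n) / e) : ℝ) : EReal) := EReal.coe_add _ _
            _ ≤ _ := add_le_add hIH hc
        -- bound v(g_n)
        have hgn : ((φ n - C - (n : ℝ) * s : ℝ) : EReal) ≤ v (PowerSeries.coeff n g) := by
          have h1 := hB n
          have h2 := ereal_sub_le _ B ((n : ℝ) * s) h1
          refine le_trans ?_ h2
          refine EReal.coe_le_coe_iff.mpr ?_
          have h3 : φ n ≤ B + C := le_trans (hφ_le n) hB'1
          linarith
        -- bound v(α * S)
        have haS2 : ((φ n - C - (n : ℝ) * s : ℝ) : EReal)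
            ≤ v (α * ∑ m ∈ Finset.range n, solCoeff q π α g m * cmn q π m n) := by
          rw [hvmul, hrα]
          exact ereal_le_add' _ (φ n - C - rα - (n : ℝ) * s) rα _ hSn (by linarith)
        have hsub : ((φ n - C - (n : ℝ) * s : ℝ) : EReal)
            ≤ v (PowerSeries.coeff n g
              - α * ∑ m ∈ Finset.range n, solCoeff q π α g m * cmn q π m n) :=
          le_trans (le_min hgn haS2) (vsub v hv1 hvmul hvadd _ _)
        exact ereal_le_add' _ (φ n - C - (n : ℝ) * s) C _ hsub (by linarith) |>.trans
          (add_le_add (hC n) le_rfl)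
  -- conclude
  obtain ⟨N₃, hN₃⟩ := log_lin (-(l * D)) s (M - B' - 2 * l)
    (by nlinarith [hD.le]) hs0
  refine ⟨N₃, fun n hn => ?_⟩
  have h1 := claim n
  rw [PowerSeries.coeff_mk]
  have h2 := hN₃ n hn
  refine ereal_le_add _ (φ n - (n : ℝ) * s) ((n : ℝ) * t) M h1 ?_
  rw [hφeq]
  have hnt : (n : ℝ) * t = (n : ℝ) * s + (n : ℝ) * s := by rw [← hst]; ring
  nlinarith [h2]

/-- Let `L` be a field with valuation `v` (containing `F`; `v π = 1/e`, `q` the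
residue cardinality).  If `α ∈ L^×` is not of the form `π^{-i}` for any `i ∈ ℕ` (equivalently
`α π^i ≠ 1` for all `i`), then `f ↦ α φ_q(f) - f` is a bijection of `R^+_L` onto itself. -/
theorem stmt_10
    (L : Type*) [Field L]
    (v : L → EReal)
    (hv0 : v 0 = ⊤) (hv1 : v 1 = 0)
    (hvmul : ∀ x y : L, v (x * y) = v x + v y)
    (hvadd : ∀ x y : L, min (v x) (v y) ≤ v (x + y))
    (π : L) (q e : ℕ) (hq : 2 ≤ q) (he : 0 < e)
    (hπ : v π = ((1 / (e : ℝ) : ℝ) : EReal))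
    (α : L) (hα0 : α ≠ 0) (hα : ∀ i : ℕ, α * π ^ i ≠ 1) :
    Set.BijOn (fun f : PowerSeries L => PowerSeries.C α * phiqPS q π f - f)
      {f : PowerSeries L | RplusMem v f} {f : PowerSeries L | RplusMem v f} := by
  have hne : ∀ n : ℕ, α * π ^ n - 1 ≠ 0 := fun n => sub_ne_zero.mpr (hα n)
  refine ⟨?_, ?_, ?_⟩
  · -- MapsTo
    intro f hf
    exact mapsTo_est v hv0 hv1 hvmul hvadd π q e hq he hπ α hα0 f hf
  · -- InjOn
    intro f₁ _ f₂ _ heq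
    simp only at heq
    ext n
    induction n using Nat.strong_induction_on with
    | _ n ih =>
      have h := congrArg (PowerSeries.coeff n) heq
      rw [coeff_T q hq, coeff_T q hq] at h
      have hsum : ∑ m ∈ Finset.range n, PowerSeries.coeff m f₁ * cmn q π m n
          = ∑ m ∈ Finset.range n, PowerSeries.coeff m f₂ * cmn q π m n :=
        Finset.sum_congr rfl fun m hm => by rw [ih m (Finset.mem_range.mp hm)]
      rw [hsum] at h
      have h2 : (α * π ^ n - 1) * PowerSeries.coeff n f₁
          = (α * π ^ n - 1) * PowerSeries.coeff n f₂ := by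
        have := add_right_cancel h
        exact this
      exact mul_left_cancel₀ (hne n) h2
  · -- SurjOn
    intro g hg
    refine ⟨PowerSeries.mk (solCoeff q π α g), ?_, ?_⟩
    · exact sol_mem v hv0 hv1 hvmul hvadd π q e hq he hπ α hα0 hα g hg
    · simp only
      ext n
      rw [coeff_T q hq, PowerSeries.coeff_mk]
      have hsum : ∑ m ∈ Finset.range n, PowerSeries.coeff m (PowerSeries.mk (solCoeff q π α g)) * cmn q π m n
          = ∑ m ∈ Finset.range n, solCoeff q π α g m * cmn q π m n :=
        Finset.sum_congr rfl fun m _ => by rw [PowerSeries.coeff_mk]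
      rw [hsum, solCoeff_eq, ← mul_assoc, mul_inv_cancel₀ (hne n), one_mul]
      ring
end

section
/- Let a ∈ O_F and let [a] ∈ O_F[[X]] be any power series with [a](X) ≡ aX mod X² and [a]([π](X)) = [π]([a](X)). Then g([a](X)) = a·g(X) in F[[X]] (i.e. σ_a(t) = a·t for the Lubin–Tate period t = g(u)). Consequently, if a ∈ O_F^×, then for every field extension L of F and every f ∈ L[[u]], ∂(f([a](u))) = a·(∂f)([a](u)), i.e. ∂∘σ_a = a·σ_a∘∂ where σ_a(f) := f∘[a]. -/
/-- The formal derivative `d/du` of a power series. -/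
noncomputable def psD {L : Type*} [CommRing L] (f : PowerSeries L) : PowerSeries L :=
  PowerSeries.mk fun n => ((n + 1 : ℕ) : L) * PowerSeries.coeff (n + 1) f

namespace PSAux
open PowerSeries Polynomial Finset

variable {L : Type*} [CommRing L]

lemma coeff_pscomp (f s : PowerSeries L) (n : ℕ) :
    coeff n (pscomp f s) =
      ∑ m ∈ Finset.range (n + 1), coeff m f * coeff n (s ^ m) := by
  simp [pscomp, coeff_mk]

lemma coeff_pow_eq_zero {s : PowerSeries L} (h0 : coeff 0 s = 0) {n m : ℕ} (h : n < m) :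
    coeff n (s ^ m) = 0 := by
  have hx : (X : PowerSeries L) ∣ s := X_dvd_iff.mpr (by
    rwa [← coeff_zero_eq_constantCoeff_apply])
  have : (X : PowerSeries L) ^ m ∣ s ^ m := pow_dvd_pow_of_dvd hx m
  exact X_pow_dvd_iff.mp this n h

/-- Coefficient of the evaluation of a polynomial at a power series with zero constant term. -/
lemma coeff_eval₂ {s : PowerSeries L} (h0 : coeff 0 s = 0) (p : Polynomial L) (n : ℕ) :
    coeff n (Polynomial.eval₂ PowerSeries.C s p) =
      ∑ m ∈ Finset.range (n + 1), p.coeff m * coeff n (s ^ m) := by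
  rw [Polynomial.eval₂_eq_sum_range' PowerSeries.C (lt_add_one _) s]
  rw [map_sum]
  have key : ∀ m : ℕ, coeff n (PowerSeries.C (p.coeff m) * s ^ m) = p.coeff m * coeff n (s ^ m) := by
    intro m; rw [PowerSeries.coeff_C_mul]
  simp only [key]
  rcases le_or_gt (p.natDegree + 1) (n + 1) with hle | hlt
  · apply Finset.sum_subset (Finset.range_subset_range.mpr hle)
    intro m hm hnm
    have : p.natDegree < m := by
      simp only [Finset.mem_range, not_lt] at hm hnm ⊢; omega
    rw [p.coeff_eq_zero_of_natDegree_lt this, zero_mul]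
  · symm
    apply Finset.sum_subset (Finset.range_subset_range.mpr hlt.le)
    intro m hm hnm
    have : n < m := by simp only [Finset.mem_range, not_lt] at hm hnm ⊢; omega
    rw [coeff_pow_eq_zero h0 this, mul_zero]

lemma coeff_pscomp_eq_eval₂ {s : PowerSeries L} (h0 : coeff 0 s = 0)
    (f : PowerSeries L) {n N : ℕ} (hn : n < N) :
    coeff n (pscomp f s) = coeff n (Polynomial.eval₂ PowerSeries.C s (trunc N f)) := by
  rw [coeff_pscomp, coeff_eval₂ h0]
  apply Finset.sum_congr rfl
  intro m hm
  rw [coeff_trunc, if_pos (lt_of_lt_of_le (Finset.mem_range.mp hm) hn)]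

lemma pscomp_add (f g s : PowerSeries L) :
    pscomp (f + g) s = pscomp f s + pscomp g s := by
  ext n
  simp [coeff_pscomp, add_mul, Finset.sum_add_distrib]

lemma pscomp_sub (f g s : PowerSeries L) :
    pscomp (f - g) s = pscomp f s - pscomp g s := by
  ext n
  simp [coeff_pscomp, sub_mul, Finset.sum_sub_distrib]

lemma pscomp_C (c : L) (s : PowerSeries L) : pscomp (PowerSeries.C c) s = PowerSeries.C c := by
  ext n
  rw [coeff_pscomp]
  rw [Finset.sum_eq_single 0]
  · simp [PowerSeries.coeff_C]
  · intro m hm hm0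
    rw [PowerSeries.coeff_C, if_neg hm0, zero_mul]
  · simp

lemma pscomp_one (s : PowerSeries L) : pscomp 1 s = 1 := by
  have := pscomp_C (1 : L) s
  simpa using this

lemma pscomp_C_mul (c : L) (f s : PowerSeries L) :
    pscomp (PowerSeries.C c * f) s = PowerSeries.C c * pscomp f s := by
  ext n
  simp [coeff_pscomp, PowerSeries.coeff_C_mul, Finset.mul_sum, mul_assoc]

lemma pscomp_coeff_zero (f s : PowerSeries L) :
    coeff 0 (pscomp f s) = coeff 0 f := by
  simp [coeff_pscomp]

lemma pscomp_X {s : PowerSeries L} (h0 : coeff 0 s = 0) : pscomp X s = s := by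
  ext n
  rw [coeff_pscomp]
  rcases Nat.eq_zero_or_pos n with rfl | hn
  · simpa using h0.symm
  · rw [Finset.sum_eq_single 1]
    · simp
    · intro m hm hm1
      rw [PowerSeries.coeff_X, if_neg hm1, zero_mul]
    · intro h; exact absurd (Finset.mem_range.mpr (by omega)) h

end PSAux
namespace PSAux
open PowerSeries Finset

variable {L : Type*} [CommRing L]

lemma coeff_trunc_mul_trunc {f g : PowerSeries L} {N m : ℕ} (hm : m < N) :
    (trunc N f * trunc N g).coeff m = coeff m (f * g) := by
  rw [Polynomial.coeff_mul, PowerSeries.coeff_mul]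
  apply Finset.sum_congr rfl
  intro x hx
  rw [Finset.HasAntidiagonal.mem_antidiagonal] at hx
  rw [coeff_trunc, coeff_trunc, if_pos (by omega), if_pos (by omega)]

lemma pscomp_mul {s : PowerSeries L} (h0 : coeff 0 s = 0) (f g : PowerSeries L) :
    pscomp (f * g) s = pscomp f s * pscomp g s := by
  ext n
  set N := n + 1 with hN
  have hn : n < N := by omega
  rw [coeff_pscomp_eq_eval₂ h0 (f * g) hn]
  have e1 : coeff n (Polynomial.eval₂ C s (trunc N (f * g)))
      = coeff n (Polynomial.eval₂ C s (trunc N f * trunc N g)) := by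
    rw [coeff_eval₂ h0, coeff_eval₂ h0]
    apply Finset.sum_congr rfl
    intro m hm
    rw [coeff_trunc_mul_trunc (by have := Finset.mem_range.mp hm; omega),
      coeff_trunc, if_pos (by have := Finset.mem_range.mp hm; omega)]
  rw [e1, Polynomial.eval₂_mul, PowerSeries.coeff_mul, PowerSeries.coeff_mul]
  apply Finset.sum_congr rfl
  intro x hx
  rw [Finset.HasAntidiagonal.mem_antidiagonal] at hx
  rw [← coeff_pscomp_eq_eval₂ h0 f (by omega : x.1 < N),
    ← coeff_pscomp_eq_eval₂ h0 g (by omega : x.2 < N)]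

lemma pscomp_pow {s : PowerSeries L} (h0 : coeff 0 s = 0) (f : PowerSeries L) (m : ℕ) :
    pscomp (f ^ m) s = pscomp f s ^ m := by
  induction m with
  | zero => simpa using pscomp_one s
  | succ k ih => rw [pow_succ, pow_succ, pscomp_mul h0, ih]

lemma pscomp_eval₂ {s t : PowerSeries L} (h0s : coeff 0 s = 0) (h0t : coeff 0 t = 0)
    (p : Polynomial L) :
    pscomp (Polynomial.eval₂ C s p) t = Polynomial.eval₂ C (pscomp s t) p := by
  induction p using Polynomial.induction_on' with
  | add p q hp hq => rw [Polynomial.eval₂_add, pscomp_add, hp, hq, Polynomial.eval₂_add]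
  | monomial m c =>
      rw [Polynomial.eval₂_monomial, Polynomial.eval₂_monomial, pscomp_C_mul,
        pscomp_pow h0t]

lemma pscomp_coeff_zero' {s : PowerSeries L} (f : PowerSeries L) :
    coeff 0 (pscomp f s) = coeff 0 f := pscomp_coeff_zero f s

lemma pscomp_assoc {s t : PowerSeries L} (h0s : coeff 0 s = 0) (h0t : coeff 0 t = 0)
    (f : PowerSeries L) :
    pscomp (pscomp f s) t = pscomp f (pscomp s t) := by
  have h0st : coeff 0 (pscomp s t) = 0 := by rw [pscomp_coeff_zero]; exact h0s
  ext n
  set N := n + 1 with hN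
  have hn : n < N := by omega
  rw [coeff_pscomp_eq_eval₂ h0st f hn, ← pscomp_eval₂ h0s h0t, coeff_pscomp, coeff_pscomp]
  apply Finset.sum_congr rfl
  intro m hm
  rw [coeff_pscomp_eq_eval₂ h0s f (by have := Finset.mem_range.mp hm; omega : m < N)]

end PSAux
namespace PSAux
open PowerSeries Finset

variable {L : Type*} [CommRing L]

lemma coeff_psD (f : PowerSeries L) (n : ℕ) :
    coeff n (psD f) = ((n + 1 : ℕ) : L) * coeff (n + 1) f := by
  simp [psD, coeff_mk]

lemma psD_eq (f : PowerSeries L) : psD f = PowerSeries.derivative L f := by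
  ext n
  rw [coeff_psD, PowerSeries.coeff_derivative, mul_comm]
  push_cast
  ring

lemma psD_add (f g : PowerSeries L) : psD (f + g) = psD f + psD g := by
  rw [psD_eq, psD_eq, psD_eq, map_add]

lemma psD_C_mul (c : L) (f : PowerSeries L) : psD (C c * f) = C c * psD f := by
  ext n
  simp [coeff_psD, PowerSeries.coeff_C_mul]
  ring

lemma psD_pow (s : PowerSeries L) (m : ℕ) :
    psD (s ^ m) = m • (s ^ (m - 1) * psD s) := by
  rw [psD_eq, psD_eq]
  have := Derivation.leibniz_pow (PowerSeries.derivative L) (a := s) (n := m)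
  rw [this, smul_eq_mul]

lemma psD_one : psD (1 : PowerSeries L) = 0 := by
  rw [psD_eq]; simp

lemma pscomp_nsmul (m : ℕ) (f s : PowerSeries L) :
    pscomp (m • f) s = m • pscomp f s := by
  rw [nsmul_eq_mul, nsmul_eq_mul, ← map_natCast C m, pscomp_C_mul]

/-- Chain rule for polynomials. -/
lemma psD_pscomp_poly {s : PowerSeries L} (h0 : coeff 0 s = 0) (p : Polynomial L) :
    psD (pscomp (↑p : PowerSeries L) s) = psD s * pscomp (psD ↑p) s := by
  induction p using Polynomial.induction_on' with
  | add p q hp hq =>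
      rw [Polynomial.coe_add, pscomp_add, psD_add, hp, hq, psD_add, pscomp_add]
      ring
  | monomial m c =>
      rw [Polynomial.coe_monomial]
      have hmon : (PowerSeries.monomial m) c = C c * X ^ m := by
        ext k
        simp only [PowerSeries.coeff_monomial, PowerSeries.coeff_C_mul,
          PowerSeries.coeff_X_pow]
        split <;> simp
      rw [hmon, pscomp_C_mul, pscomp_pow h0, pscomp_X h0,
        psD_C_mul, psD_pow, psD_C_mul]
      have hX : psD (X ^ m : PowerSeries L) = m • ((X : PowerSeries L) ^ (m - 1) * 1) := by
        rw [psD_pow]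
        congr 1
        rw [psD_eq, PowerSeries.derivative_X]
      rw [hX, pscomp_C_mul, pscomp_nsmul, pscomp_mul h0, pscomp_pow h0, pscomp_X h0,
        pscomp_one]
      rw [mul_smul_comm]
      congr 1
      ring

lemma psD_pscomp {s : PowerSeries L} (h0 : coeff 0 s = 0) (f : PowerSeries L) :
    psD (pscomp f s) = psD s * pscomp (psD f) s := by
  ext n
  set T : PowerSeries L := ↑(trunc (n + 2) f) with hT
  have hcoe : ∀ m, m ≤ n + 1 → coeff m T = coeff m f := by
    intro m hm
    rw [hT, Polynomial.coeff_coe, coeff_trunc, if_pos (by omega)]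
  have hL : coeff n (psD (pscomp f s)) = coeff n (psD (pscomp T s)) := by
    rw [coeff_psD, coeff_psD, coeff_pscomp, coeff_pscomp]
    congr 1
    apply Finset.sum_congr rfl
    intro m hm
    rw [hcoe m (by have := Finset.mem_range.mp hm; omega)]
  have hD : ∀ j, j ≤ n → coeff j (pscomp (psD f) s) = coeff j (pscomp (psD T) s) := by
    intro j hj
    rw [coeff_pscomp, coeff_pscomp]
    apply Finset.sum_congr rfl
    intro m hm
    rw [coeff_psD, coeff_psD, hcoe (m + 1) (by have := Finset.mem_range.mp hm; omega)]
  have hR : coeff n (psD s * pscomp (psD f) s) = coeff n (psD s * pscomp (psD T) s) := by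
    rw [PowerSeries.coeff_mul, PowerSeries.coeff_mul]
    apply Finset.sum_congr rfl
    intro x hx
    rw [Finset.HasAntidiagonal.mem_antidiagonal] at hx
    rw [hD x.2 (by omega)]
  rw [hL, hR, psD_pscomp_poly h0]

end PSAux

open PSAux

/-- Let `a ∈ O_F` and let `[a]` (here `sa`) be any power series in `O_F[[X]]` with
`[a](X) ≡ aX mod X²` and `[a]([π](X)) = [π]([a](X))`, where `[π](X) = X^q + π X`.  Let `g` be
the Lubin–Tate logarithm (`g ≡ X mod X²`, `g([π]X) = π g(X)`).  Then `g([a](X)) = a · g(X)`.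
Consequently, if `a ∈ O_F^×` (i.e. `v a = 0`), then for every `f ∈ L[[u]]`,
`∂(f ∘ [a]) = a · (∂ f) ∘ [a]`, where `∂ = (g')⁻¹ d/du`. -/
theorem stmt_14
    (L : Type*) [Field L]
    (v : L → EReal)
    (hv0 : v 0 = ⊤) (hv1 : v 1 = 0)
    (hvmul : ∀ x y : L, v (x * y) = v x + v y)
    (hvadd : ∀ x y : L, min (v x) (v y) ≤ v (x + y))
    (π : L) (q e : ℕ) (hq : 2 ≤ q) (he : 0 < e)
    (hπ : v π = ((1 / (e : ℝ) : ℝ) : EReal))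
    (gs : PowerSeries L)
    (hg0 : PowerSeries.coeff 0 gs = 0) (hg1 : PowerSeries.coeff 1 gs = 1)
    (hgeq : pscomp gs (PowerSeries.X ^ q + PowerSeries.C π * PowerSeries.X)
      = PowerSeries.C π * gs)
    (a : L) (ha : (0 : EReal) ≤ v a)
    (sa : PowerSeries L)
    (hsa0 : PowerSeries.coeff 0 sa = 0) (hsa1 : PowerSeries.coeff 1 sa = a)
    (hsaO : ∀ n : ℕ, (0 : EReal) ≤ v (PowerSeries.coeff n sa))
    (hsacomm : pscomp sa (PowerSeries.X ^ q + PowerSeries.C π * PowerSeries.X)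
      = sa ^ q + PowerSeries.C π * sa) :
    pscomp gs sa = PowerSeries.C a * gs ∧
    (v a = 0 → ∀ f : PowerSeries L,
      (psD gs)⁻¹ * psD (pscomp f sa)
        = PowerSeries.C a * pscomp ((psD gs)⁻¹ * psD f) sa) := by
  classical
  set P : PowerSeries L := PowerSeries.X ^ q + PowerSeries.C π * PowerSeries.X with hPdef
  have hP0 : PowerSeries.coeff 0 P = 0 := by
    rw [hPdef, map_add, PowerSeries.coeff_X_pow, PowerSeries.coeff_C_mul,
      PowerSeries.coeff_X, if_neg (by omega), if_neg (by omega)]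
    ring
  have hPsa : pscomp P sa = sa ^ q + PowerSeries.C π * sa := by
    rw [hPdef, pscomp_add, pscomp_pow hsa0, pscomp_C_mul, pscomp_X hsa0]
  set h : PowerSeries L := pscomp gs sa - PowerSeries.C a * gs with hhdef
  have hstep : pscomp (pscomp gs sa) P = PowerSeries.C π * pscomp gs sa := by
    rw [pscomp_assoc hsa0 hP0, hsacomm, ← hPsa, ← pscomp_assoc hP0 hsa0, hgeq, pscomp_C_mul]
  have hhP : pscomp h P = PowerSeries.C π * h := by
    rw [hhdef, pscomp_sub, hstep, pscomp_C_mul, hgeq, mul_sub]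
    ring
  have heR : (e : ℝ) ≠ 0 := Nat.cast_ne_zero.mpr he.ne'
  have hvpow : ∀ n : ℕ, v (π ^ n) = (((n : ℝ) / (e : ℝ) : ℝ) : EReal) := by
    intro n
    induction n with
    | zero => simpa using hv1
    | succ k ih =>
        rw [pow_succ, hvmul, ih, hπ, ← EReal.coe_add]
        congr 1
        push_cast
        field_simp
  have hπpow_ne : ∀ n : ℕ, 2 ≤ n → π ^ n ≠ π := by
    intro n hn hne
    have h1 := hvpow n
    rw [hne, hπ] at h1
    have h2 : ((n : ℝ) / (e : ℝ)) = 1 / (e : ℝ) := (EReal.coe_eq_coe_iff.mp h1).symm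
    have h3 : (n : ℝ) = 1 := by
      field_simp at h2
      exact_mod_cast h2
    have h4 : n = 1 := by exact_mod_cast h3
    omega
  have hcoeffP : ∀ n : ℕ, PowerSeries.coeff n (P ^ n) = π ^ n := by
    intro n
    have hq1 : q - 1 + 1 = q := by omega
    have hXq : (PowerSeries.X : PowerSeries L) ^ q
        = PowerSeries.X * PowerSeries.X ^ (q - 1) := by
      rw [← pow_succ', hq1]
    have hfac : P = PowerSeries.X *
        (PowerSeries.X ^ (q - 1) + PowerSeries.C π) := by
      rw [hPdef, hXq]
      ring
    rw [hfac, mul_pow]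
    have := PowerSeries.coeff_X_pow_mul
      ((PowerSeries.X ^ (q - 1) + PowerSeries.C π) ^ n) n 0
    rw [zero_add] at this
    rw [this, PowerSeries.coeff_zero_eq_constantCoeff_apply, map_pow, map_add, map_pow,
      PowerSeries.constantCoeff_X, PowerSeries.constantCoeff_C,
      zero_pow (by omega : q - 1 ≠ 0), zero_add]
  have hzero : ∀ n : ℕ, PowerSeries.coeff n h = 0 := by
    intro n
    induction n using Nat.strong_induction_on with
    | _ n ih =>
      match n, ih with
      | 0, _ =>
        rw [hhdef, map_sub, pscomp_coeff_zero, PowerSeries.coeff_C_mul, hg0]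
        ring
      | 1, _ =>
        rw [hhdef, map_sub, coeff_pscomp, PowerSeries.coeff_C_mul, hg1,
          Finset.sum_range_succ, Finset.sum_range_succ, Finset.sum_range_zero]
        simp [hg0, hg1, hsa1]
      | (k+2), ih =>
        have hthis := congrArg (PowerSeries.coeff (k+2)) hhP
        rw [coeff_pscomp, Finset.sum_range_succ, PowerSeries.coeff_C_mul] at hthis
        have hz : ∑ m ∈ Finset.range (k+2),
            PowerSeries.coeff m h * PowerSeries.coeff (k+2) (P ^ m) = 0 := by
          apply Finset.sum_eq_zero
          intro m hm
          rw [ih m (Finset.mem_range.mp hm), zero_mul]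
        rw [hz, zero_add, hcoeffP] at hthis
        by_contra hne
        rw [mul_comm π] at hthis
        exact hπpow_ne (k+2) (by omega) (mul_left_cancel₀ hne hthis)
  have hh0 : h = 0 := by
    ext n
    rw [hzero n, map_zero]
  have part1 : pscomp gs sa = PowerSeries.C a * gs := by
    have := sub_eq_zero.mp (hhdef ▸ hh0)
    exact this
  refine ⟨part1, ?_⟩
  intro hva f
  have ha0 : a ≠ 0 := by
    intro hz
    rw [hz, hv0] at hva
    exact EReal.top_ne_zero hva
  set D : PowerSeries L := psD gs with hD
  have hDconst : PowerSeries.constantCoeff D = 1 := by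
    rw [hD, ← PowerSeries.coeff_zero_eq_constantCoeff_apply, coeff_psD]
    simp [hg1]
  have hDne : PowerSeries.constantCoeff D ≠ 0 := by rw [hDconst]; exact one_ne_zero
  set E : PowerSeries L := pscomp D sa with hE
  have hEconst : PowerSeries.constantCoeff E = 1 := by
    rw [hE, ← PowerSeries.coeff_zero_eq_constantCoeff_apply, pscomp_coeff_zero,
      PowerSeries.coeff_zero_eq_constantCoeff_apply, hDconst]
  have hEne : PowerSeries.constantCoeff E ≠ 0 := by rw [hEconst]; exact one_ne_zero
  have hchain : psD sa * E = PowerSeries.C a * D := by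
    rw [hE, hD, ← psD_pscomp hsa0, part1, psD_C_mul]
  have hDinv : D⁻¹ * D = 1 := PowerSeries.inv_mul_cancel D hDne
  have hEinv : E⁻¹ * E = 1 := PowerSeries.inv_mul_cancel E hEne
  have hDE : pscomp D⁻¹ sa * E = 1 := by
    rw [hE, ← pscomp_mul hsa0, hDinv, pscomp_one]
  have hDne' : D ≠ 0 := by
    intro hz
    rw [hz, map_zero] at hDconst
    exact one_ne_zero hDconst.symm
  have hEne' : E ≠ 0 := by
    intro hz
    rw [hz, map_zero] at hEconst
    exact one_ne_zero hEconst.symm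
  have hkey : D⁻¹ * psD sa = PowerSeries.C a * pscomp D⁻¹ sa := by
    apply mul_right_cancel₀ (mul_ne_zero hDne' hEne')
    calc D⁻¹ * psD sa * (D * E) = (D⁻¹ * D) * (psD sa * E) := by ring
      _ = PowerSeries.C a * D := by rw [hDinv, hchain, one_mul]
      _ = PowerSeries.C a * D * (pscomp D⁻¹ sa * E) := by rw [hDE, mul_one]
      _ = PowerSeries.C a * pscomp D⁻¹ sa * (D * E) := by ring
  rw [psD_pscomp hsa0 f, pscomp_mul hsa0]
  calc D⁻¹ * (psD sa * pscomp (psD f) sa)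
      = (D⁻¹ * psD sa) * pscomp (psD f) sa := by ring
    _ = (PowerSeries.C a * pscomp D⁻¹ sa) * pscomp (psD f) sa := by rw [hkey]
    _ = PowerSeries.C a * (pscomp D⁻¹ sa * pscomp (psD f) sa) := by ring
end

section
/- Write the Lubin–Tate logarithm as g = ∑_{n≥1} c_n·X^n (so c_1 = 1). Then: (1) v_π(c_n) ≥ −N whenever n ≤ q^N; (2) v_π(c_{q^N}) = −N for every natural number N. In particular inf_n v_p(c_n) = −∞, so the coefficients of g are unbounded; hence g converges on the open unit disc but does not have bounded coefficients (g lies in the Robba ring R_F but not in the ring E^†_F of overconvergent series with bounded coefficients). -/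
open Polynomial Finset

theorem coeff_lt_pow {F : Type*} [Field F] (π : F) (q m n : ℕ) :
    ((X ^ q + C π * X : F[X]) ^ m).coeff n
      = ∑ k ∈ Finset.range (m+1),
          if q * k + (m - k) = n then π ^ (m - k) * (m.choose k : F) else 0 := by
  rw [add_pow, finset_sum_coeff]
  refine Finset.sum_congr rfl fun k hk => ?_
  rw [mul_pow, ← C_pow, ← pow_mul]
  rw [show ((m.choose k : F[X])) = C ((m.choose k : F)) by exact (C_eq_natCast _).symm]
  rw [show (X ^ (q*k) * (C (π ^ (m-k)) * X ^ (m-k)) * C ((m.choose k : F)))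
      = C (π ^ (m-k) * (m.choose k : F)) * X ^ (q*k + (m-k)) by
    rw [Polynomial.C_mul, pow_add]; ring]
  rw [coeff_C_mul, coeff_X_pow]
  simp [eq_comm, mul_ite]

theorem nat_cond {q k m n : ℕ} (hq : 1 ≤ q) (hk : k ≤ m) :
    q*k + (m-k) = n ↔ (q-1)*k + m = n := by
  obtain ⟨p, rfl⟩ : ∃ p, q = p + 1 := ⟨q-1, by omega⟩
  simp only [Nat.add_sub_cancel]
  have e : (p+1)*k = p*k + k := by ring
  rw [e]
  generalize p*k = t
  omega

theorem qmul_split (q m : ℕ) (hq : 1 ≤ q) : q * m = (q-1)*m + m := by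
  obtain ⟨p, rfl⟩ : ∃ p, q = p + 1 := ⟨q-1, by omega⟩
  simp only [Nat.add_sub_cancel]
  ring

theorem ereal_self_add {a : EReal} (h : a + a = 0) : a = 0 := by
  induction a using EReal.rec with
  | bot => simp at h
  | coe r => rw [← EReal.coe_add] at h; norm_cast at h ⊢; linarith
  | top => simp at h

theorem ereal_cancel {r : ℝ} {a b : EReal} (h : (r : EReal) + a ≤ (r : EReal) + b) : a ≤ b := by
  have h2 := add_le_add_right h ((-r : ℝ) : EReal)
  rwa [← add_assoc, ← add_assoc, show ((-r:ℝ):EReal) + (r:EReal) = 0 by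
      rw [← EReal.coe_add]; norm_num, zero_add, zero_add] at h2

theorem ereal_cancel_eq {r : ℝ} {a b : EReal} (h : (r : EReal) + a = (r : EReal) + b) : a = b :=
  le_antisymm (ereal_cancel h.le) (ereal_cancel h.ge)

section
variable {F : Type*} [Field F] (vπ : F → EReal)
  (hv0 : vπ 0 = ⊤) (hv1 : vπ 1 = 0)
  (hvmul : ∀ x y : F, vπ (x * y) = vπ x + vπ y)
  (hvadd : ∀ x y : F, min (vπ x) (vπ y) ≤ vπ (x + y))

include hv0 hv1 hvadd in
theorem vpi_nat (n : ℕ) : (0 : EReal) ≤ vπ (n : F) := by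
  induction n with
  | zero => simp [hv0]
  | succ k ih =>
    push_cast
    refine le_trans ?_ (hvadd (k : F) 1)
    simp [hv1, ih]

include hv1 hvmul in
theorem vpi_neg_one : vπ (-1 : F) = 0 := by
  have h : vπ (-1 : F) + vπ (-1 : F) = 0 := by
    rw [← hvmul]; norm_num [hv1]
  exact ereal_self_add h

include hv1 hvmul in
theorem vpi_neg' (x : F) : vπ (-x) = vπ x := by
  rw [show -x = -1 * x by ring, hvmul, vpi_neg_one vπ hv1 hvmul, zero_add]

include hv1 hvmul hvadd in
theorem vpi_add_eq {x y : F} (h : vπ x < vπ y) : vπ (x + y) = vπ x := by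
  refine le_antisymm ?_ (le_trans (by simp [le_of_lt h]) (hvadd x y))
  have h2 := hvadd (x + y) (-y)
  rw [add_neg_cancel_right, vpi_neg' vπ hv1 hvmul] at h2
  rcases min_le_iff.mp h2 with h3 | h3
  · exact h3
  · exact absurd h3 (not_le.mpr h)

include hv0 hvadd in
theorem vpi_sum {ι : Type*} (s : Finset ι) (f : ι → F) (b : EReal)
    (h : ∀ i ∈ s, b ≤ vπ (f i)) : b ≤ vπ (∑ i ∈ s, f i) := by
  induction s using Finset.cons_induction with
  | empty => simp [hv0]
  | cons a s ha ih =>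
    rw [Finset.sum_cons]
    refine le_trans ?_ (hvadd _ _)
    simp only [le_min_iff]
    exact ⟨h a (Finset.mem_cons_self a s), ih fun i hi => h i (Finset.mem_cons_of_mem hi)⟩

include hv1 hvmul in
theorem vpi_pow (π : F) (hπ : vπ π = 1) (k : ℕ) : vπ (π ^ k) = ((k : ℝ) : EReal) := by
  induction k with
  | zero => simp [hv1]
  | succ j ih =>
    rw [pow_succ, hvmul, ih, hπ]
    rw [show (1 : EReal) = ((1:ℝ) : EReal) by norm_cast, ← EReal.coe_add]
    norm_cast

end

theorem a_diag {F : Type*} [Field F] (π : F) {q : ℕ} (hq : 2 ≤ q) (n : ℕ) :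
    ((X^q + C π * X : F[X])^n).coeff n = π ^ n := by
  rw [coeff_lt_pow]
  rw [Finset.sum_eq_single_of_mem 0 (Finset.mem_range.mpr (Nat.succ_pos n))]
  · simp
  · intro k hk hkne
    rw [if_neg]
    rw [nat_cond (by omega) (Nat.lt_succ_iff.mp (Finset.mem_range.mp hk))]
    intro h
    have h2 : (q-1)*k = 0 := by omega
    rcases Nat.mul_eq_zero.mp h2 with h1 | h1 <;> omega

theorem a_main {F : Type*} [Field F] (π : F) {q : ℕ} (hq : 2 ≤ q) (N : ℕ) :
    ((X^q + C π * X : F[X])^(q^N)).coeff (q^(N+1)) = 1 := by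
  have hkey : (q-1)*q^N + q^N = q^(N+1) := by
    rw [← qmul_split q (q^N) (by omega), ← pow_succ']
  rw [coeff_lt_pow]
  rw [Finset.sum_eq_single_of_mem (q^N) (Finset.mem_range.mpr (Nat.lt_succ_self _))]
  · rw [if_pos]
    · simp
    · rw [nat_cond (by omega) le_rfl]
      exact hkey
  · intro k hk hkne
    rw [if_neg]
    rw [nat_cond (by omega) (Nat.lt_succ_iff.mp (Finset.mem_range.mp hk))]
    intro h
    have h2 : (q-1)*k = (q-1)*q^N := by omega
    exact hkne (Nat.eq_of_mul_eq_mul_left (by omega) h2)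

theorem key_part1
    {F : Type*} [Field F]
    (vπ : F → EReal)
    (hv0 : vπ 0 = ⊤) (hv1 : vπ 1 = 0)
    (hvmul : ∀ x y : F, vπ (x * y) = vπ x + vπ y)
    (hvadd : ∀ x y : F, min (vπ x) (vπ y) ≤ vπ (x + y))
    (π : F) (q : ℕ) (hq : 2 ≤ q) (hπ : vπ π = 1)
    (c : ℕ → F) (hc0 : c 0 = 0) (hc1 : c 1 = 1)
    (hceq : ∀ n : ℕ, π * c n =
      ∑ m ∈ Finset.range (n + 1),
        c m * (((Polynomial.X : Polynomial F) ^ q + Polynomial.C π * Polynomial.X) ^ m).coeff n) :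
    ∀ n N : ℕ, n ≤ q ^ N → ((-(N : ℝ) : ℝ) : EReal) ≤ vπ (c n) := by
  intro n
  induction n using Nat.strong_induction_on with
  | _ n IH =>
  intro N hN
  rcases Nat.lt_or_ge n 2 with hn2 | hn2
  · interval_cases n
    · rw [hc0, hv0]; exact le_top
    · rw [hc1, hv1]
      exact_mod_cast neg_nonpos.mpr (Nat.cast_nonneg N)
  · have hN1 : 1 ≤ N := by
      by_contra hcon
      have hN0 : N = 0 := by omega
      rw [hN0, pow_zero] at hN
      omega
    have h := hceq n
    rw [Finset.sum_range_succ, a_diag π hq n] at h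
    set S := ∑ m ∈ Finset.range n,
      c m * ((X^q + C π * X : F[X])^m).coeff n with hS
    have heqn : (π - π^n) * c n = S := by rw [hS]; linear_combination h
    have hvsub : vπ (π - π^n) = 1 := by
      rw [sub_eq_add_neg, vpi_add_eq vπ hv1 hvmul hvadd, hπ]
      rw [vpi_neg' vπ hv1 hvmul, vpi_pow vπ hv1 hvmul π hπ, hπ]
      exact_mod_cast (by exact_mod_cast hn2 : (1:ℝ) < (n:ℝ))
    have hSbound : ((1 - (N:ℝ) : ℝ) : EReal) ≤ vπ S := by
      rw [hS]
      apply vpi_sum vπ hv0 hvadd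
      intro m hm
      rw [coeff_lt_pow, Finset.mul_sum]
      apply vpi_sum vπ hv0 hvadd
      intro k hk
      by_cases hcond : q * k + (m - k) = n
      case neg => rw [if_neg hcond, mul_zero, hv0]; exact le_top
      rw [if_pos hcond]
      have hkm : k ≤ m := Nat.lt_succ_iff.mp (Finset.mem_range.mp hk)
      have hmn : m < n := Finset.mem_range.mp hm
      rw [← mul_assoc, hvmul, hvmul, vpi_pow vπ hv1 hvmul π hπ]
      have hch : (0:EReal) ≤ vπ ((m.choose k : ℕ) : F) :=
        vpi_nat vπ hv0 hv1 hvadd _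
      rw [nat_cond (by omega) hkm] at hcond
      have hstep : ∀ r : ℝ, ((r : ℝ) : EReal) ≤ vπ (c m) →
          (1 - (N:ℝ) : ℝ) ≤ r + ((m-k : ℕ) : ℝ) →
          ((1 - (N:ℝ) : ℝ) : EReal) ≤ vπ (c m) + (((m-k : ℕ):ℝ) : EReal) + vπ ((m.choose k : ℕ) : F) := by
        intro r hr hineq
        calc ((1 - (N:ℝ) : ℝ) : EReal) ≤ ((r : ℝ) : EReal) + (((m-k:ℕ):ℝ) : EReal) := by
              rw [← EReal.coe_add]; exact EReal.coe_le_coe_iff.mpr hineq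
          _ ≤ vπ (c m) + (((m-k:ℕ):ℝ) : EReal) := add_le_add_left hr _
          _ ≤ vπ (c m) + (((m-k:ℕ):ℝ) : EReal) + vπ ((m.choose k : ℕ) : F) := by
              simpa using add_le_add_right hch (vπ (c m) + (((m-k:ℕ):ℝ) : EReal))
      by_cases hcase : m ≤ q^(N-1)
      · refine hstep (-(((N-1:ℕ)):ℝ)) (IH m hmn (N-1) hcase) ?_
        have he : ((N-1:ℕ):ℝ) = (N:ℝ) - 1 := by
          rw [Nat.cast_sub hN1]; simp
        have hnn : (0:ℝ) ≤ ((m-k:ℕ):ℝ) := Nat.cast_nonneg _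
        rw [he]; linarith
      · push_neg at hcase
        refine hstep (-((N:ℕ):ℝ)) (IH m hmn N (le_of_lt (lt_of_lt_of_le hmn hN))) ?_
        have hkm1 : k < m := by
          rcases Nat.lt_or_ge k m with h1 | h1
          · exact h1
          · exfalso
            have hkeq : k = m := le_antisymm hkm h1
            rw [hkeq] at hcond
            have e1 : q * q^(N-1) < q * m :=
              mul_lt_mul_of_pos_left hcase (show 0 < q by omega)
            rw [qmul_split q m (by omega)] at e1
            have e2 : q^N = q * q^(N-1) := by
              rw [← pow_succ']
              congr 1
              omega
            omega
        have h1 : (1:ℝ) ≤ ((m-k:ℕ):ℝ) := by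
          exact_mod_cast (by omega : 1 ≤ m - k)
        linarith
    have hprod : (1:EReal) + vπ (c n) = vπ S := by
      rw [← hvsub, ← hvmul, heqn]
    apply ereal_cancel (r := 1)
    rw [show ((1:ℝ):EReal) = (1:EReal) from EReal.coe_one, hprod]
    refine le_trans (le_of_eq ?_) hSbound
    rw [show (1:EReal) = ((1:ℝ):EReal) from EReal.coe_one.symm, ← EReal.coe_add]
    congr 1

theorem key_part2
    {F : Type*} [Field F]
    (vπ : F → EReal)
    (hv0 : vπ 0 = ⊤) (hv1 : vπ 1 = 0)
    (hvmul : ∀ x y : F, vπ (x * y) = vπ x + vπ y)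
    (hvadd : ∀ x y : F, min (vπ x) (vπ y) ≤ vπ (x + y))
    (π : F) (q : ℕ) (hq : 2 ≤ q) (hπ : vπ π = 1)
    (c : ℕ → F) (hc0 : c 0 = 0) (hc1 : c 1 = 1)
    (hceq : ∀ n : ℕ, π * c n =
      ∑ m ∈ Finset.range (n + 1),
        c m * (((Polynomial.X : Polynomial F) ^ q + Polynomial.C π * Polynomial.X) ^ m).coeff n) :
    ∀ N : ℕ, vπ (c (q ^ N)) = ((-(N : ℝ) : ℝ) : EReal) := by
  intro N
  induction N with
  | zero => simp [pow_zero, hc1, hv1]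
  | succ N ih =>
    have hkey : (q-1)*q^N + q^N = q^(N+1) := by
      rw [← qmul_split q (q^N) (by omega), ← pow_succ']
    have hq1N : 1 ≤ q^N := Nat.one_le_pow _ _ (by omega)
    have hn2 : 2 ≤ q^(N+1) := by
      calc 2 ≤ q := hq
        _ = q^1 := (pow_one q).symm
        _ ≤ q^(N+1) := Nat.pow_le_pow_right (by omega) (by omega)
    have h := hceq (q^(N+1))
    rw [Finset.sum_range_succ, a_diag π hq (q^(N+1))] at h
    set S := ∑ m ∈ Finset.range (q^(N+1)),
      c m * ((X^q + C π * X : F[X])^m).coeff (q^(N+1)) with hS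
    have heqn : (π - π^(q^(N+1))) * c (q^(N+1)) = S := by rw [hS]; linear_combination h
    have hvsub : vπ (π - π^(q^(N+1))) = 1 := by
      rw [sub_eq_add_neg, vpi_add_eq vπ hv1 hvmul hvadd, hπ]
      rw [vpi_neg' vπ hv1 hvmul, vpi_pow vπ hv1 hvmul π hπ, hπ]
      exact_mod_cast (by exact_mod_cast hn2 : (1:ℝ) < ((q^(N+1) : ℕ):ℝ))
    have hmlt0 : q^N < q^(N+1) := by
      calc q^N = 1*q^N := (one_mul _).symm
        _ < q*q^N := mul_lt_mul_of_pos_right (by omega) (by omega)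
        _ = q^(N+1) := (pow_succ' q N).symm
    have hm0 : q^N ∈ Finset.range (q^(N+1)) := Finset.mem_range.mpr hmlt0
    have hsplit : S = c (q^N) + ∑ m ∈ (Finset.range (q^(N+1))).erase (q^N),
        c m * ((X^q + C π * X : F[X])^m).coeff (q^(N+1)) := by
      rw [hS, ← Finset.add_sum_erase _ _ hm0, a_main π hq N, mul_one]
    have hrest : ((1 - (N:ℝ) : ℝ) : EReal) ≤ vπ (∑ m ∈ (Finset.range (q^(N+1))).erase (q^N),
        c m * ((X^q + C π * X : F[X])^m).coeff (q^(N+1))) := by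
      apply vpi_sum vπ hv0 hvadd
      intro m hm
      obtain ⟨hmne, hmrange⟩ := Finset.mem_erase.mp hm
      have hmlt : m < q^(N+1) := Finset.mem_range.mp hmrange
      rw [coeff_lt_pow, Finset.mul_sum]
      apply vpi_sum vπ hv0 hvadd
      intro k hk
      by_cases hcond : q * k + (m - k) = q^(N+1)
      case neg => rw [if_neg hcond, mul_zero, hv0]; exact le_top
      rw [if_pos hcond]
      have hkm : k ≤ m := Nat.lt_succ_iff.mp (Finset.mem_range.mp hk)
      rw [← mul_assoc, hvmul, hvmul, vpi_pow vπ hv1 hvmul π hπ]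
      have hch : (0:EReal) ≤ vπ ((m.choose k : ℕ) : F) :=
        vpi_nat vπ hv0 hv1 hvadd _
      rw [nat_cond (by omega) hkm] at hcond
      have hmgt : q^N < m := by
        rcases Nat.lt_or_ge m (q^N) with h1 | h1
        · exfalso
          have e1 : (q-1)*k ≤ (q-1)*m := Nat.mul_le_mul_left _ hkm
          have e2 : (q-1)*m ≤ (q-1)*q^N := Nat.mul_le_mul_left _ (le_of_lt h1)
          omega
        · omega
      have hmk : 2 ≤ m - k := by
        by_contra hcon
        have hk1 : m - 1 ≤ k := by omega
        have e1 : (q-1)*q^N ≤ (q-1)*(m-1) := Nat.mul_le_mul_left _ (by omega)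
        have e2 : (q-1)*(m-1) ≤ (q-1)*k := Nat.mul_le_mul_left _ hk1
        omega
      have hm1 : ((-(((N+1:ℕ)):ℝ) : ℝ) : EReal) ≤ vπ (c m) :=
        key_part1 vπ hv0 hv1 hvmul hvadd π q hq hπ c hc0 hc1 hceq m (N+1) (le_of_lt hmlt)
      calc ((1 - (N:ℝ) : ℝ) : EReal)
          ≤ ((-(((N+1:ℕ)):ℝ) : ℝ) : EReal) + (((m-k:ℕ):ℝ) : EReal) := by
            rw [← EReal.coe_add]
            apply EReal.coe_le_coe_iff.mpr
            have h2 : (2:ℝ) ≤ ((m-k:ℕ):ℝ) := by exact_mod_cast hmk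
            push_cast
            linarith
        _ ≤ vπ (c m) + (((m-k:ℕ):ℝ) : EReal) := add_le_add_left hm1 _
        _ ≤ vπ (c m) + (((m-k:ℕ):ℝ) : EReal) + vπ ((m.choose k : ℕ) : F) := by
            simpa using add_le_add_right hch (vπ (c m) + (((m-k:ℕ):ℝ) : EReal))
    have hvS : vπ S = ((-(N:ℝ) : ℝ) : EReal) := by
      rw [hsplit, vpi_add_eq vπ hv1 hvmul hvadd, ih]
      rw [ih]
      refine lt_of_lt_of_le ?_ hrest
      exact EReal.coe_lt_coe_iff.mpr (by linarith)
    have hprod : (1:EReal) + vπ (c (q^(N+1))) = vπ S := by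
      rw [← hvsub, ← hvmul, heqn]
    apply ereal_cancel_eq (r := 1)
    rw [show ((1:ℝ):EReal) = (1:EReal) from EReal.coe_one, hprod, hvS,
      show (1:EReal) = ((1:ℝ):EReal) from EReal.coe_one.symm, ← EReal.coe_add]
    congr 1
    push_cast
    ring

/-- Write the Lubin–Tate logarithm of the special Lubin–Tate group as
`g = ∑_{n≥1} c n · X^n` (so `c 1 = 1`; it is characterized by `c 0 = 0`, `c 1 = 1` and
`g(X^q + π X) = π g(X)`), over the base field `F` with valuation `v_π` normalized by
`v_π π = 1`.  Then:
(1) `v_π (c n) ≥ -N` whenever `n ≤ q^N`;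
(2) `v_π (c (q^N)) = -N` for every `N`;
(3) in particular `inf_n v_π (c n) = -∞`, i.e. the coefficients of `g` are unbounded. -/
theorem stmt_15
    (F : Type*) [Field F]
    (vπ : F → EReal)
    (hv0 : vπ 0 = ⊤) (hv1 : vπ 1 = 0)
    (hvmul : ∀ x y : F, vπ (x * y) = vπ x + vπ y)
    (hvadd : ∀ x y : F, min (vπ x) (vπ y) ≤ vπ (x + y))
    (π : F) (q : ℕ) (hq : 2 ≤ q) (hπ : vπ π = 1)
    (c : ℕ → F) (hc0 : c 0 = 0) (hc1 : c 1 = 1)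
    (hceq : ∀ n : ℕ, π * c n =
      ∑ m ∈ Finset.range (n + 1),
        c m * (((Polynomial.X : Polynomial F) ^ q + Polynomial.C π * Polynomial.X) ^ m).coeff n) :
    (∀ N n : ℕ, n ≤ q ^ N → ((-(N : ℝ) : ℝ) : EReal) ≤ vπ (c n)) ∧
    (∀ N : ℕ, vπ (c (q ^ N)) = ((-(N : ℝ) : ℝ) : EReal)) ∧
    (∀ M : ℝ, ∃ n : ℕ, vπ (c n) < (M : EReal)) := by
  refine ⟨fun N n hn => key_part1 vπ hv0 hv1 hvmul hvadd π q hq hπ c hc0 hc1 hceq n N hn,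
    key_part2 vπ hv0 hv1 hvmul hvadd π q hq hπ c hc0 hc1 hceq, ?_⟩
  intro M
  obtain ⟨N, hN⟩ := exists_nat_gt (-M)
  refine ⟨q ^ N, ?_⟩
  rw [key_part2 vπ hv0 hv1 hvmul hvadd π q hq hπ c hc0 hc1 hceq N]
  exact EReal.coe_lt_coe_iff.mpr (by linarith)
end
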